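/- arXiv:1901.07382 — 4 statements merged into one kernel-verified Lean document; each statement's English description precedes it below -/
import Mathlib

section
/- Let p, q be coprime complex polynomials with deg p > deg q, and let ζ₁, …, ζ_s be the distinct roots of p. Then there exists ε > 0 such that for every c with 0 < c < ε, the map sending each root ζ_i to the connected component of {z ∈ ℂ : |p(z)| < c·|q(z)|} containing it is a bijection from {ζ₁, …, ζ_s} onto the set of connected components of {z ∈ ℂ : |p(z)| < c·|q(z)|}. -/
open Polynomial Metric Set Bornology Finset

private lemma poly_eval_norm_le (r : Polynomial ℂ) (d : ℕ) (hd : r.natDegree ≤ d) (z : ℂ)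
    (hz : 1 ≤ ‖z‖) :
    ‖r.eval z‖ ≤ (∑ i ∈ Finset.range (d + 1), ‖r.coeff i‖) * ‖z‖ ^ d := by
  rw [Polynomial.eval_eq_sum_range' (lt_of_le_of_lt hd (Nat.lt_succ_self d)) z]
  calc ‖∑ i ∈ Finset.range (d + 1), r.coeff i * z ^ i‖
      ≤ ∑ i ∈ Finset.range (d + 1), ‖r.coeff i * z ^ i‖ := norm_sum_le _ _
    _ ≤ ∑ i ∈ Finset.range (d + 1), ‖r.coeff i‖ * ‖z‖ ^ d := by
        refine Finset.sum_le_sum fun i hi => ?_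
        rw [norm_mul, norm_pow]
        exact mul_le_mul_of_nonneg_left
          (pow_le_pow_right₀ hz (Nat.lt_succ_iff.mp (Finset.mem_range.mp hi)))
          (norm_nonneg _)
    _ = (∑ i ∈ Finset.range (d + 1), ‖r.coeff i‖) * ‖z‖ ^ d := by
        rw [Finset.sum_mul]

private lemma poly_tail_bound (p q : Polynomial ℂ) (hdeg : q.natDegree < p.natDegree) :
    ∃ R > (0 : ℝ), ∀ z : ℂ, R ≤ ‖z‖ → ‖q.eval z‖ ≤ ‖p.eval z‖ := by
  have hp : p ≠ 0 := by
    intro h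
    simp [h] at hdeg
  set n := p.natDegree with hn
  have hn1 : 1 ≤ n := Nat.one_le_iff_ne_zero.mpr (by omega)
  set a := ‖p.leadingCoeff‖ with haa
  have ha : 0 < a := norm_pos_iff.mpr (Polynomial.leadingCoeff_ne_zero.mpr hp)
  set B := ∑ i ∈ Finset.range (n - 1 + 1), ‖p.eraseLead.coeff i‖ with hB
  set Cq := ∑ i ∈ Finset.range (n - 1 + 1), ‖q.coeff i‖ with hCq
  refine ⟨max 1 ((B + Cq) / a + 1), lt_of_lt_of_le one_pos (le_max_left _ _), fun z hz => ?_⟩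
  have hz1 : 1 ≤ ‖z‖ := le_trans (le_max_left _ _) hz
  have hz2 : (B + Cq) / a + 1 ≤ ‖z‖ := le_trans (le_max_right _ _) hz
  have hza : B + Cq ≤ a * ‖z‖ := by
    rw [div_add' _ _ _ (ne_of_gt ha), div_le_iff₀ ha] at hz2
    nlinarith
  have hqb : ‖q.eval z‖ ≤ Cq * ‖z‖ ^ (n - 1) :=
    poly_eval_norm_le q (n - 1) (by omega) z hz1
  have heb : ‖p.eraseLead.eval z‖ ≤ B * ‖z‖ ^ (n - 1) :=
    poly_eval_norm_le p.eraseLead (n - 1) (p.eraseLead_natDegree_le) z hz1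
  have hev : p.eval z = p.eraseLead.eval z + p.leadingCoeff * z ^ n := by
    rw [hn]
    conv_lhs => rw [← p.eraseLead_add_C_mul_X_pow]
    rw [Polynomial.eval_add, Polynomial.eval_mul, Polynomial.eval_pow, Polynomial.eval_C,
      Polynomial.eval_X]
  have hlead : ‖p.leadingCoeff * z ^ n‖ = a * ‖z‖ ^ n := by
    rw [norm_mul, norm_pow]
  have hpow : ‖z‖ ^ n = ‖z‖ ^ (n - 1) * ‖z‖ := by
    rw [← pow_succ]
    congr 1
    omega
  have hpl : a * ‖z‖ ^ n - B * ‖z‖ ^ (n - 1) ≤ ‖p.eval z‖ := by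
    rw [hev]
    have h1 := norm_sub_le (p.eraseLead.eval z + p.leadingCoeff * z ^ n) (p.eraseLead.eval z)
    simp only [add_sub_cancel_left] at h1
    rw [hlead] at h1
    linarith
  have hzp : (0:ℝ) ≤ ‖z‖ ^ (n - 1) := by positivity
  have : Cq * ‖z‖ ^ (n - 1) ≤ a * ‖z‖ ^ n - B * ‖z‖ ^ (n - 1) := by
    rw [hpow]
    nlinarith
  linarith

private lemma finset_sep (F : Finset ℂ) :
    ∃ δ > (0:ℝ), ∀ x ∈ F, ∀ y ∈ F, x ≠ y → 2 * δ ≤ dist x y := by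
  rcases (F.offDiag.image fun x => dist x.1 x.2).eq_empty_or_nonempty with h | h
  · refine ⟨1, one_pos, fun x hx y hy hxy => absurd ?_ (Finset.notMem_empty (dist x y))⟩
    rw [← h]
    exact Finset.mem_image.mpr ⟨(x, y), Finset.mem_offDiag.mpr ⟨hx, hy, hxy⟩, rfl⟩
  · have hmem := (F.offDiag.image fun x => dist x.1 x.2).min'_mem h
    rw [Finset.mem_image] at hmem
    obtain ⟨⟨x, y⟩, hxy, hd⟩ := hmem
    have hxyne : x ≠ y := (Finset.mem_offDiag.mp hxy).2.2
    have hmpos : 0 < (F.offDiag.image fun x => dist x.1 x.2).min' h :=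
      hd ▸ dist_pos.mpr hxyne
    refine ⟨(F.offDiag.image fun x => dist x.1 x.2).min' h / 2, by linarith,
      fun x hx y hy hxy => ?_⟩
    have : (F.offDiag.image fun x => dist x.1 x.2).min' h ≤ dist x y := Finset.min'_le _ _
      (Finset.mem_image.mpr ⟨(x, y), Finset.mem_offDiag.mpr ⟨hx, hy, hxy⟩, rfl⟩)
    linarith
open Polynomial Metric Set Bornology

private lemma exists_root_in_component (p q : Polynomial ℂ)
    (hpq0 : ∀ z : ℂ, p.eval z = 0 → q.eval z ≠ 0)
    (c : ℝ) (hc : 0 < c) {R : ℝ}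
    (hSbound : ∀ z : ℂ, ‖p.eval z‖ < c * ‖q.eval z‖ → ‖z‖ ≤ R) :
    ∀ z₀ ∈ {z : ℂ | ‖p.eval z‖ < c * ‖q.eval z‖},
      ∃ w ∈ connectedComponentIn {z : ℂ | ‖p.eval z‖ < c * ‖q.eval z‖} z₀, p.eval w = 0 := by
  set S := {z : ℂ | ‖p.eval z‖ < c * ‖q.eval z‖} with hSdef
  have hSopen : IsOpen S :=
    isOpen_lt p.continuous.norm (continuous_const.mul q.continuous.norm)
  intro z₀ hz₀
  by_contra hno
  push_neg at hno
  set U := connectedComponentIn S z₀ with hUdef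
  have hUopen : IsOpen U := hSopen.connectedComponentIn
  have hUS : U ⊆ S := connectedComponentIn_subset S z₀
  have hz₀U : z₀ ∈ U := mem_connectedComponentIn hz₀
  have hUb : IsBounded U := (isBounded_closedBall (x := (0:ℂ)) (r := R)).subset
    (fun z hz => mem_closedBall_zero_iff.mpr (hSbound z (hUS hz)))
  have hfr : ∀ w ∈ frontier U, ‖p.eval w‖ = c * ‖q.eval w‖ := by
    intro w hw
    have hle : ‖p.eval w‖ ≤ c * ‖q.eval w‖ := by
      have hcl : closure S ⊆ {z : ℂ | ‖p.eval z‖ ≤ c * ‖q.eval z‖} :=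
        closure_minimal (Set.setOf_subset_setOf.mpr (fun z => le_of_lt))
          (isClosed_le p.continuous.norm (continuous_const.mul q.continuous.norm))
      exact hcl (closure_mono hUS (frontier_subset_closure hw))
    have hnotS : w ∉ S := by
      intro hwS
      have h1 : w ∈ connectedComponentIn S w := mem_connectedComponentIn hwS
      have h2 : IsOpen (connectedComponentIn S w) := hSopen.connectedComponentIn
      have hwcl : w ∈ closure U := frontier_subset_closure hw
      rw [_root_.mem_closure_iff] at hwcl
      obtain ⟨y, hy1, hy2⟩ := hwcl _ h2 h1
      have e1 : connectedComponentIn S w = connectedComponentIn S y := connectedComponentIn_eq hy1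
      have e2 : connectedComponentIn S z₀ = connectedComponentIn S y := connectedComponentIn_eq hy2
      have hwU : w ∈ U := by
        rw [hUdef, e2, ← e1]
        exact h1
      rw [hUopen.frontier_eq] at hw
      exact hw.2 hwU
    have hge : c * ‖q.eval w‖ ≤ ‖p.eval w‖ := not_lt.mp hnotS
    linarith
  have hpcl : ∀ w ∈ closure U, p.eval w ≠ 0 := by
    intro w hw
    rw [closure_eq_self_union_frontier] at hw
    rcases hw with hw | hw
    · exact hno w hw
    · intro h0
      have h1 := hfr w hw
      rw [h0, norm_zero] at h1
      have hq0 : q.eval w = 0 := by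
        have := norm_nonneg (q.eval w)
        have : ‖q.eval w‖ = 0 := by nlinarith
        exact norm_eq_zero.mp this
      exact hpq0 w h0 hq0
  have hdc : DiffContOnCl ℂ (fun z => q.eval z / p.eval z) U :=
    ⟨fun z hz => ((q.differentiable z).div (p.differentiable z)
        (hpcl z (subset_closure hz))).differentiableWithinAt,
      q.continuous.continuousOn.div p.continuous.continuousOn hpcl⟩
  have hCb : ∀ w ∈ frontier U, ‖q.eval w / p.eval w‖ ≤ 1 / c := by
    intro w hw
    have hpe := hfr w hw
    have hp0 : p.eval w ≠ 0 := hpcl w (frontier_subset_closure hw)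
    have hppos : 0 < ‖p.eval w‖ := norm_pos_iff.mpr hp0
    have hqpos : 0 < ‖q.eval w‖ := by nlinarith [norm_nonneg (q.eval w)]
    rw [norm_div, hpe]
    have : ‖q.eval w‖ / (c * ‖q.eval w‖) = 1 / c := by
      rw [mul_comm c, ← div_div, div_self (ne_of_gt hqpos)]
    exact le_of_eq this
  have hle := Complex.norm_le_of_forall_mem_frontier_norm_le hUb hdc hCb (subset_closure hz₀U)
  have hp0 : p.eval z₀ ≠ 0 := hno z₀ hz₀U
  have hppos : 0 < ‖p.eval z₀‖ := norm_pos_iff.mpr hp0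
  have hz₀S : ‖p.eval z₀‖ < c * ‖q.eval z₀‖ := hz₀
  have hqpos : 0 < ‖q.eval z₀‖ := by nlinarith [norm_nonneg (q.eval z₀)]
  have hgt : 1 / c < ‖q.eval z₀ / p.eval z₀‖ := by
    rw [norm_div]
    have h2 : ‖q.eval z₀‖ / (c * ‖q.eval z₀‖) < ‖q.eval z₀‖ / ‖p.eval z₀‖ :=
      div_lt_div_of_pos_left hqpos hppos hz₀S
    have h3 : ‖q.eval z₀‖ / (c * ‖q.eval z₀‖) = 1 / c := by
      rw [mul_comm c, ← div_div, div_self (ne_of_gt hqpos)]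
    linarith
  linarith


/-- Let `p, q` be coprime complex polynomials with `deg p > deg q`, and let
`ζ₁, …, ζ_s` be the distinct roots of `p`.  Then there is `ε > 0` such that for
every `0 < c < ε`, sending each root of `p` to the connected component of
`{z : |p(z)| < c·|q(z)|}` containing it is a bijection from the set of roots of
`p` onto the set of connected components of `{z : |p(z)| < c·|q(z)|}`. -/
theorem components_of_small_rational_sublevel_biject_with_zeros
    (p q : Polynomial ℂ) (hpq : IsCoprime p q) (hdeg : q.natDegree < p.natDegree) :
    ∃ ε > (0 : ℝ), ∀ c : ℝ, 0 < c → c < ε →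
      Set.BijOn
        (fun ζ => connectedComponentIn
          {z : ℂ | ‖p.eval z‖ < c * ‖q.eval z‖} ζ)
        {ζ : ℂ | p.eval ζ = 0}
        {U : Set ℂ | ∃ z ∈ {z : ℂ | ‖p.eval z‖ < c * ‖q.eval z‖},
          U = connectedComponentIn
            {z : ℂ | ‖p.eval z‖ < c * ‖q.eval z‖} z} := by
  classical
  have hp : p ≠ 0 := by
    intro h
    simp [h] at hdeg
  have hpq0 : ∀ z : ℂ, p.eval z = 0 → q.eval z ≠ 0 := by
    intro z hz hqz
    obtain ⟨a, b, hab⟩ := hpq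
    have h := congrArg (Polynomial.eval z) hab
    simp [hz, hqz] at h
  obtain ⟨R, hR, hRtail⟩ := poly_tail_bound p q hdeg
  have hfin : Set.Finite {ζ : ℂ | p.eval ζ = 0} := Polynomial.finite_setOf_isRoot hp
  obtain ⟨δ, hδ, hsep⟩ := finset_sep hfin.toFinset
  set Z := {ζ : ℂ | p.eval ζ = 0} with hZ
  set W := ⋃ ζ ∈ Z, Metric.ball ζ δ with hW
  have hWopen : IsOpen W := isOpen_biUnion fun ζ _ => Metric.isOpen_ball
  set K := Metric.closedBall (0:ℂ) R \ W with hKdef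
  have hK : IsCompact K := (isCompact_closedBall (0:ℂ) R).diff hWopen
  have hKp : ∀ z ∈ K, p.eval z ≠ 0 := by
    intro z hzK h0
    exact hzK.2 (Set.mem_biUnion (show z ∈ Z from h0) (Metric.mem_ball_self hδ))
  have hK1 : ∃ ε₁ > (0:ℝ), ∀ z ∈ K, ε₁ * ‖q.eval z‖ ≤ ‖p.eval z‖ := by
    rcases K.eq_empty_or_nonempty with hKe | hKne
    · exact ⟨1, one_pos, fun z hz => absurd (hKe ▸ hz) (Set.notMem_empty z)⟩
    · obtain ⟨zm, hzm, hmin⟩ := hK.exists_isMinOn hKne p.continuous.norm.continuousOn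
      obtain ⟨zM, hzM, hmax⟩ := hK.exists_isMaxOn hKne q.continuous.norm.continuousOn
      have hm : 0 < ‖p.eval zm‖ := norm_pos_iff.mpr (hKp zm hzm)
      have hM : 0 ≤ ‖q.eval zM‖ := norm_nonneg _
      refine ⟨‖p.eval zm‖ / (‖q.eval zM‖ + 1), by positivity, fun z hz => ?_⟩
      have h1 : ‖p.eval zm‖ ≤ ‖p.eval z‖ := hmin hz
      have h2 : ‖q.eval z‖ ≤ ‖q.eval zM‖ := hmax hz
      rw [div_mul_eq_mul_div, div_le_iff₀ (by linarith)]
      nlinarith [norm_nonneg (q.eval z)]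
  obtain ⟨ε₁, hε₁, hKbound⟩ := hK1
  refine ⟨min ε₁ 1, lt_min hε₁ one_pos, fun c hc hcε => ?_⟩
  have hcε₁ : c < ε₁ := lt_of_lt_of_le hcε (min_le_left _ _)
  have hc1 : c < 1 := lt_of_lt_of_le hcε (min_le_right _ _)
  set S := {z : ℂ | ‖p.eval z‖ < c * ‖q.eval z‖} with hSdef
  have hSbound : ∀ z : ℂ, ‖p.eval z‖ < c * ‖q.eval z‖ → ‖z‖ ≤ R := by
    intro z hz
    by_contra h
    have hRz : R ≤ ‖z‖ := le_of_lt (not_le.mp h)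
    have h1 : ‖q.eval z‖ ≤ ‖p.eval z‖ := hRtail z hRz
    have h2 : c * ‖q.eval z‖ ≤ ‖q.eval z‖ :=
      mul_le_of_le_one_left (norm_nonneg _) hc1.le
    linarith
  have hSW : S ⊆ W := by
    intro z hz
    by_contra hzW
    have hzS : ‖p.eval z‖ < c * ‖q.eval z‖ := hz
    have hzK : z ∈ K := ⟨mem_closedBall_zero_iff.mpr (hSbound z hzS), hzW⟩
    have h1 : ε₁ * ‖q.eval z‖ ≤ ‖p.eval z‖ := hKbound z hzK
    rcases eq_or_lt_of_le (norm_nonneg (q.eval z)) with hq | hq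
    · rw [← hq, mul_zero] at hzS
      exact absurd hzS (not_lt.mpr (norm_nonneg _))
    · nlinarith
  have hrootS : ∀ ζ ∈ Z, ζ ∈ S := by
    intro ζ hζ
    have h0 : p.eval ζ = 0 := hζ
    have hq : 0 < ‖q.eval ζ‖ := norm_pos_iff.mpr (hpq0 ζ h0)
    show ‖p.eval ζ‖ < c * ‖q.eval ζ‖
    rw [h0, norm_zero]
    positivity
  refine ⟨fun ζ hζ => ⟨ζ, hrootS ζ hζ, rfl⟩, ?_, ?_⟩
  · -- injectivity
    intro ζ hζ ζ' hζ' heq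
    by_contra hne
    have hζS := hrootS ζ hζ
    have hζ'S := hrootS ζ' hζ'
    set U := connectedComponentIn S ζ with hU
    have hUsub : U ⊆ W := (connectedComponentIn_subset S ζ).trans hSW
    set A := Metric.ball ζ δ with hA
    set B := ⋃ η ∈ Z \ {ζ}, Metric.ball η δ with hB
    have hcover : U ⊆ A ∪ B := by
      intro w hw
      obtain ⟨η, hη, hwη⟩ := Set.mem_iUnion₂.mp (hUsub hw)
      rcases eq_or_ne η ζ with h | h
      · refine Or.inl ?_
        rw [hA, ← h]
        exact hwη
      · exact Or.inr (Set.mem_biUnion ⟨hη, h⟩ hwη)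
    have hAB : (U ∩ (A ∩ B)).Nonempty := by
      refine isPreconnected_connectedComponentIn A B Metric.isOpen_ball
        (isOpen_biUnion fun η _ => Metric.isOpen_ball) hcover
        ⟨ζ, mem_connectedComponentIn hζS, Metric.mem_ball_self hδ⟩
        ⟨ζ', ?_, Set.mem_biUnion ⟨hζ', fun h => hne (Eq.symm h)⟩ (Metric.mem_ball_self hδ)⟩
      have heq' : connectedComponentIn S ζ = connectedComponentIn S ζ' := heq
      rw [heq']
      exact mem_connectedComponentIn hζ'S
    obtain ⟨w, _, hwA, hwB⟩ := hAB
    obtain ⟨η, hη, hwη⟩ := Set.mem_iUnion₂.mp hwB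
    have hsep' : 2 * δ ≤ dist ζ η := by
      refine hsep ζ (hfin.mem_toFinset.mpr hζ) η (hfin.mem_toFinset.mpr hη.1) ?_
      exact fun h => hη.2 (Eq.symm h)
    have hd1 : dist w ζ < δ := Metric.mem_ball.mp hwA
    have hd2 : dist w η < δ := Metric.mem_ball.mp hwη
    have := dist_triangle ζ w η
    rw [dist_comm ζ w] at this
    linarith
  · -- surjectivity
    intro U hU
    obtain ⟨z₀, hz₀S, hUeq⟩ := hU
    obtain ⟨w, hwU, hw0⟩ := exists_root_in_component p q hpq0 c hc hSbound z₀ hz₀S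
    exact ⟨w, hw0, by rw [hUeq, connectedComponentIn_eq hwU]⟩
end

section
/- Let p, q be coprime complex polynomials with deg p > deg q ≥ 1, and let b₁, …, b_t be the distinct roots of q. Then there exists C > 0 such that for every c > C, the set {z ∈ ℂ : |p(z)| > c·|q(z)|} has exactly t + 1 connected components: exactly one unbounded component, and t bounded components each containing exactly one of the roots b₁, …, b_t. -/
open Polynomial Filter Metric Set Bornology Topology


private lemma tail_bound (p q : Polynomial ℂ) (hdeg : q.natDegree < p.natDegree)
    (c : ℝ) (hc : 0 ≤ c) :
    ∃ R : ℝ, 0 < R ∧ ∀ z : ℂ, R < ‖z‖ → c * ‖q.eval z‖ < ‖p.eval z‖ := by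
  obtain ⟨m, hm⟩ : ∃ m, p.natDegree = m + 1 :=
    ⟨p.natDegree - 1, (Nat.succ_pred_eq_of_pos (by omega)).symm⟩
  have hp0 : p ≠ 0 := by
    intro h
    rw [h, natDegree_zero] at hdeg; omega
  set a := ‖p.coeff p.natDegree‖ with ha_def
  have ha : 0 < a := by
    rw [ha_def, norm_pos_iff]
    exact leadingCoeff_ne_zero.mpr hp0
  set Ap := ∑ i ∈ Finset.range (m + 1), ‖p.coeff i‖ with hAp_def
  set Aq := ∑ i ∈ Finset.range (q.natDegree + 1), ‖q.coeff i‖ with hAq_def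
  have hAp0 : 0 ≤ Ap := Finset.sum_nonneg fun _ _ => norm_nonneg _
  have hAq0 : 0 ≤ Aq := Finset.sum_nonneg fun _ _ => norm_nonneg _
  have key : ∀ (r : Polynomial ℂ) (k : ℕ), r.natDegree < k + 1 → ∀ z : ℂ, 1 ≤ ‖z‖ →
      ‖∑ i ∈ Finset.range (r.natDegree + 1), r.coeff i * z ^ i‖ ≤
        (∑ i ∈ Finset.range (r.natDegree + 1), ‖r.coeff i‖) * ‖z‖ ^ k := by
    intro r k hk z hz
    calc ‖∑ i ∈ Finset.range (r.natDegree + 1), r.coeff i * z ^ i‖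
        ≤ ∑ i ∈ Finset.range (r.natDegree + 1), ‖r.coeff i * z ^ i‖ := norm_sum_le _ _
      _ ≤ ∑ i ∈ Finset.range (r.natDegree + 1), ‖r.coeff i‖ * ‖z‖ ^ k := by
          refine Finset.sum_le_sum fun i hi => ?_
          rw [norm_mul, norm_pow]
          refine mul_le_mul_of_nonneg_left ?_ (norm_nonneg _)
          exact pow_le_pow_right₀ hz (by
            have := Finset.mem_range.mp hi; omega)
      _ = (∑ i ∈ Finset.range (r.natDegree + 1), ‖r.coeff i‖) * ‖z‖ ^ k :=
          (Finset.sum_mul _ _ _).symm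
  have hqb : ∀ z : ℂ, 1 ≤ ‖z‖ → ‖q.eval z‖ ≤ Aq * ‖z‖ ^ m := by
    intro z hz
    rw [eval_eq_sum_range]
    exact key q m (by omega) z hz
  have hpb : ∀ z : ℂ, 1 ≤ ‖z‖ → a * ‖z‖ ^ (m + 1) - Ap * ‖z‖ ^ m ≤ ‖p.eval z‖ := by
    intro z hz
    have hsplit : p.eval z =
        (∑ i ∈ Finset.range (m + 1), p.coeff i * z ^ i) + p.coeff (m + 1) * z ^ (m + 1) := by
      rw [eval_eq_sum_range, hm, Finset.sum_range_succ]
    set A := ∑ i ∈ Finset.range (m + 1), p.coeff i * z ^ i with hA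
    have hAle : ‖A‖ ≤ Ap * ‖z‖ ^ m := by
      -- apply key to the truncated polynomial? Instead redo directly
      calc ‖A‖ ≤ ∑ i ∈ Finset.range (m + 1), ‖p.coeff i * z ^ i‖ := norm_sum_le _ _
        _ ≤ ∑ i ∈ Finset.range (m + 1), ‖p.coeff i‖ * ‖z‖ ^ m := by
            refine Finset.sum_le_sum fun i hi => ?_
            rw [norm_mul, norm_pow]
            refine mul_le_mul_of_nonneg_left ?_ (norm_nonneg _)
            exact pow_le_pow_right₀ hz (by have := Finset.mem_range.mp hi; omega)
        _ = Ap * ‖z‖ ^ m := (Finset.sum_mul _ _ _).symm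
    have hB : ‖p.coeff (m + 1) * z ^ (m + 1)‖ = a * ‖z‖ ^ (m + 1) := by
      rw [norm_mul, norm_pow, ha_def, hm]
    have h1 : ‖p.coeff (m + 1) * z ^ (m + 1)‖ ≤ ‖p.eval z‖ + ‖A‖ := by
      have : p.coeff (m + 1) * z ^ (m + 1) = p.eval z - A := by rw [hsplit]; ring
      rw [this]
      exact norm_sub_le _ _
    rw [hB] at h1
    linarith
  refine ⟨max 1 ((c * Aq + Ap + 1) / a), lt_max_of_lt_left one_pos, fun z hz => ?_⟩
  have hz1 : 1 ≤ ‖z‖ := le_of_lt (lt_of_le_of_lt (le_max_left _ _) hz)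
  have hza : c * Aq + Ap + 1 < a * ‖z‖ := by
    rw [← div_lt_iff₀' ha]
    exact lt_of_le_of_lt (le_max_right _ _) hz
  have hzm : (1 : ℝ) ≤ ‖z‖ ^ m := one_le_pow₀ hz1
  calc c * ‖q.eval z‖ ≤ c * (Aq * ‖z‖ ^ m) :=
        mul_le_mul_of_nonneg_left (hqb z hz1) hc
    _ = (c * Aq) * ‖z‖ ^ m := by ring
    _ < (a * ‖z‖ - Ap) * ‖z‖ ^ m := by nlinarith
    _ = a * ‖z‖ ^ (m + 1) - Ap * ‖z‖ ^ m := by ring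
    _ ≤ ‖p.eval z‖ := hpb z hz1


private lemma isPreconnected_norm_gt {R : ℝ} (hR : 0 ≤ R) :
    IsPreconnected {z : ℂ | R < ‖z‖} := by
  have hrank : 1 < Module.rank ℝ ℂ := by
    rw [Complex.rank_real_complex]; norm_num
  set T := {z : ℂ | R < ‖z‖} with hT
  set A := Metric.sphere (0 : ℂ) (R + 1) with hA
  have hApre : IsPreconnected A := isPreconnected_sphere hrank 0 (R + 1)
  have hAsub : A ⊆ T := by
    intro z hz
    have : ‖z‖ = R + 1 := mem_sphere_zero_iff_norm.mp hz
    simp only [hT, mem_setOf_eq, this]; linarith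
  have ha₀ : ((R + 1 : ℝ) : ℂ) ∈ A := by
    rw [hA, mem_sphere_zero_iff_norm, Complex.norm_real, Real.norm_eq_abs,
      abs_of_pos (by linarith : (0:ℝ) < R + 1)]
  have key : ∀ z : T, ∃ B : Set ℂ,
      IsPreconnected B ∧ B ⊆ T ∧ (z : ℂ) ∈ B ∧ ((R + 1 : ℝ) : ℂ) ∈ B := by
    rintro ⟨z, hz⟩
    have hzn : 0 < ‖z‖ := lt_of_le_of_lt hR hz
    set L := (fun t : ℝ => t • z) '' Set.Ioi (R / ‖z‖) with hL
    have hLpre : IsPreconnected L :=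
      (isPreconnected_Ioi).image _ (continuous_id.smul continuous_const).continuousOn
    have hLsub : L ⊆ T := by
      rintro _ ⟨t, ht, rfl⟩
      have ht0 : 0 < t := lt_of_le_of_lt (div_nonneg hR hzn.le) ht
      have hnorm : ‖t • z‖ = t * ‖z‖ := by
        rw [norm_smul, Real.norm_eq_abs, abs_of_pos ht0]
      simp only [hT, mem_setOf_eq, hnorm]
      rw [Set.mem_Ioi, div_lt_iff₀ hzn] at ht
      linarith
    have hzL : z ∈ L := ⟨1, by rw [Set.mem_Ioi, div_lt_one hzn]; exact hz, one_smul _ _⟩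
    have hx₀L : ((R + 1) / ‖z‖) • z ∈ L := by
      refine ⟨(R + 1) / ‖z‖, ?_, rfl⟩
      rw [Set.mem_Ioi, div_lt_div_iff₀ hzn hzn]
      nlinarith
    have hx₀A : ((R + 1) / ‖z‖) • z ∈ A := by
      have : ‖((R + 1) / ‖z‖) • z‖ = R + 1 := by
        rw [norm_smul, Real.norm_eq_abs,
          abs_of_pos (div_pos (by linarith) hzn), div_mul_cancel₀]
        exact hzn.ne'
      rw [hA, mem_sphere_zero_iff_norm, this]
    exact ⟨A ∪ L, hApre.union _ hx₀A hx₀L hLpre, Set.union_subset hAsub hLsub,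
      Or.inr hzL, Or.inl ha₀⟩
  choose B hBpre hBsub hBmem hBa using key
  have hTeq : T = ⋃ z : T, B z := by
    apply Set.Subset.antisymm
    · intro z hz
      exact Set.mem_iUnion.2 ⟨⟨z, hz⟩, hBmem ⟨z, hz⟩⟩
    · exact Set.iUnion_subset fun z => hBsub z
  rw [hTeq, ← Set.sUnion_range]
  refine isPreconnected_sUnion ((R + 1 : ℝ) : ℂ) _ ?_ ?_
  · rintro s ⟨z, rfl⟩; exact hBa z
  · rintro s ⟨z, rfl⟩; exact hBpre z


private lemma frontier_component_not_mem {S : Set ℂ} (hS : IsOpen S) {z x : ℂ}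
    (hx : x ∈ frontier (connectedComponentIn S z)) : x ∉ S := by
  intro hxS
  have hUopen : IsOpen (connectedComponentIn S z) := hS.connectedComponentIn
  have hxcl : x ∈ closure (connectedComponentIn S z) := hx.1
  have hnhds : connectedComponentIn S x ∈ 𝓝 x :=
    connectedComponentIn_mem_nhds (hS.mem_nhds hxS)
  obtain ⟨y, hy1, hy2⟩ := mem_closure_iff_nhds.mp hxcl _ hnhds
  have e1 : connectedComponentIn S x = connectedComponentIn S y := connectedComponentIn_eq hy1
  have e2 : connectedComponentIn S z = connectedComponentIn S y := connectedComponentIn_eq hy2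
  have hxU : x ∈ connectedComponentIn S z := by
    rw [e2, ← e1]
    exact mem_connectedComponentIn hxS
  exact hx.2 (by rwa [hUopen.interior_eq])

private lemma bounded_component_has_root (p q : Polynomial ℂ)
    (hnr : ∀ x : ℂ, q.eval x = 0 → p.eval x ≠ 0) {c : ℝ} (hc : 0 < c) {z : ℂ}
    (hz : c * ‖q.eval z‖ < ‖p.eval z‖)
    (hb : IsBounded (connectedComponentIn {w : ℂ | c * ‖q.eval w‖ < ‖p.eval w‖} z)) :
    ∃ b ∈ connectedComponentIn {w : ℂ | c * ‖q.eval w‖ < ‖p.eval w‖} z, q.eval b = 0 := by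
  by_contra h
  push_neg at h
  set S := {w : ℂ | c * ‖q.eval w‖ < ‖p.eval w‖} with hS_def
  have hSopen : IsOpen S :=
    isOpen_lt (continuous_const.mul (q.continuous_aeval.norm)) (p.continuous_aeval.norm)
  set U := connectedComponentIn S z with hU_def
  have hzS : z ∈ S := hz
  have hUne : U.Nonempty := ⟨z, mem_connectedComponentIn hzS⟩
  have hqU : ∀ x ∈ U, q.eval x ≠ 0 := fun x hx => h x hx
  have hfr : ∀ x ∈ frontier U, x ∉ S := fun x hx => frontier_component_not_mem hSopen hx
  have hqcl : ∀ x ∈ closure U, q.eval x ≠ 0 := by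
    intro x hxcl
    by_cases hxU : x ∈ U
    · exact hqU x hxU
    · have hxfr : x ∈ frontier U :=
        ⟨hxcl, fun hxi => hxU (by rwa [hSopen.connectedComponentIn.interior_eq] at hxi)⟩
      intro hq0
      have hxS : x ∉ S := hfr x hxfr
      have h1 : ¬ (c * ‖q.eval x‖ < ‖p.eval x‖) := hxS
      rw [hq0] at h1
      simp only [norm_zero, mul_zero, not_lt] at h1
      exact hnr x hq0 (norm_le_zero_iff.mp h1)
  set f := fun w : ℂ => p.eval w / q.eval w with hf_def
  have hd : DiffContOnCl ℂ f U := by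
    constructor
    · intro x hx
      exact ((p.differentiable.differentiableAt).div
        (q.differentiable.differentiableAt) (hqU x hx)).differentiableWithinAt
    · exact ContinuousOn.div (p.continuous.continuousOn) (q.continuous.continuousOn) hqcl
  obtain ⟨x, hxfr, hmax⟩ := Complex.exists_mem_frontier_isMaxOn_norm hb hUne hd
  have hxcl : x ∈ closure U := hxfr.1
  have hqx : q.eval x ≠ 0 := hqcl x hxcl
  have hxS : x ∉ S := hfr x hxfr
  have hfx : ‖f x‖ ≤ c := by
    have h1 : ‖p.eval x‖ ≤ c * ‖q.eval x‖ := not_lt.mp hxS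
    rw [hf_def, norm_div, div_le_iff₀ (norm_pos_iff.mpr hqx)]
    linarith [h1]
  have hfz : c < ‖f z‖ := by
    rw [hf_def, norm_div, lt_div_iff₀ (norm_pos_iff.mpr (hqU z (mem_connectedComponentIn hzS)))]
    exact hz
  have hzcl : z ∈ closure U := subset_closure (mem_connectedComponentIn hzS)
  have hle := hmax hzcl
  have hle' : ‖f z‖ ≤ ‖f x‖ := hle
  linarith

open Polynomial Filter Metric Set Bornology Topology

/-- Let `p, q` be coprime complex polynomials with `deg p > deg q ≥ 1`, and let
`b₁, …, b_t` be the distinct roots of `q`.  Then there is `C > 0` such that for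
every `c > C`, the superlevel set `{z : |p(z)| > c·|q(z)|}` has exactly one
unbounded connected component, and its bounded connected components are in
bijection with the roots of `q`, each bounded component containing exactly one
root (via `b ↦ connectedComponentIn _ b`). -/
theorem components_of_large_rational_superlevel
    (p q : Polynomial ℂ) (hpq : IsCoprime p q)
    (hdeg : q.natDegree < p.natDegree) (hq : 1 ≤ q.natDegree) :
    ∃ C > (0 : ℝ), ∀ c : ℝ, C < c →
      (∃! U : Set ℂ,
        (∃ z ∈ {z : ℂ | c * ‖q.eval z‖ < ‖p.eval z‖},
          U = connectedComponentIn
            {z : ℂ | c * ‖q.eval z‖ < ‖p.eval z‖} z) ∧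
        ¬ Bornology.IsBounded U) ∧
      Set.BijOn
        (fun b => connectedComponentIn
          {z : ℂ | c * ‖q.eval z‖ < ‖p.eval z‖} b)
        {b : ℂ | q.eval b = 0}
        {U : Set ℂ |
          (∃ z ∈ {z : ℂ | c * ‖q.eval z‖ < ‖p.eval z‖},
            U = connectedComponentIn
              {z : ℂ | c * ‖q.eval z‖ < ‖p.eval z‖} z) ∧
          Bornology.IsBounded U} := by
  have hq0 : q ≠ 0 := fun h => by rw [h, natDegree_zero] at hq; omega
  have hp0 : p ≠ 0 := fun h => by rw [h, natDegree_zero] at hdeg; omega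
  have hnr : ∀ x : ℂ, q.eval x = 0 → p.eval x ≠ 0 := by
    intro x hqx hpx
    obtain ⟨a, b, hab⟩ := hpq
    have h1 := congrArg (Polynomial.eval x) hab
    simp [hqx, hpx] at h1
  set Zfin := q.roots.toFinset with hZfin
  have hmemZ : ∀ b : ℂ, b ∈ Zfin ↔ q.eval b = 0 := by
    intro b
    rw [hZfin, Multiset.mem_toFinset, mem_roots hq0]
    rfl
  have hZne : Zfin.Nonempty := by
    obtain ⟨b, hb⟩ := Complex.exists_root
      (natDegree_pos_iff_degree_pos.mp (by omega : 0 < q.natDegree))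
    exact ⟨b, (hmemZ b).2 hb⟩
  -- separation radius ε
  set D := Zfin.offDiag.image (fun pr => dist pr.1 pr.2 / 3) with hD
  have hinsne : (insert (1:ℝ) D).Nonempty := ⟨1, Finset.mem_insert_self 1 D⟩
  set ε := (insert (1:ℝ) D).min' hinsne with hε
  have hε0 : 0 < ε := by
    have hmem : ε ∈ insert (1:ℝ) D := Finset.min'_mem _ _
    rcases Finset.mem_insert.mp hmem with h | h
    · rw [h]; norm_num
    · rw [hD] at h
      obtain ⟨pr, hpr, hpr2⟩ := Finset.mem_image.mp h
      obtain ⟨_, _, hne⟩ := Finset.mem_offDiag.mp hpr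
      rw [← hpr2]
      have : 0 < dist pr.1 pr.2 := dist_pos.2 hne
      linarith
  have hsep : ∀ b ∈ Zfin, ∀ b' ∈ Zfin, b ≠ b' → ε ≤ dist b b' / 3 := by
    intro b hb b' hb' hne
    exact Finset.min'_le _ _ (Finset.mem_insert_of_mem
      (Finset.mem_image.2 ⟨(b, b'), Finset.mem_offDiag.2 ⟨hb, hb', hne⟩, rfl⟩))
  have hdisj : ∀ b ∈ Zfin, ∀ b' ∈ Zfin, b ≠ b' → Disjoint (ball b ε) (ball b' ε) := by
    intro b hb b' hb' hne
    apply ball_disjoint_ball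
    have h3 := hsep b hb b' hb' hne
    have h4 : 0 < dist b b' := dist_pos.2 hne
    linarith
  -- outer radius R
  set R := ε + Zfin.sup' hZne (fun b => ‖b‖) with hR
  have hsupn : 0 ≤ Zfin.sup' hZne (fun b => ‖b‖) := by
    obtain ⟨b, hb⟩ := hZne
    exact le_trans (norm_nonneg b) (Finset.le_sup' _ hb)
  have hR0 : 0 < R := by rw [hR]; linarith
  have hball_le : ∀ b ∈ Zfin, ∀ z ∈ ball b ε, ‖z‖ ≤ R := by
    intro b hb z hz
    have h1 : ‖z - b‖ < ε := by rwa [mem_ball, dist_eq_norm] at hz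
    have h2 : ‖b‖ ≤ Zfin.sup' hZne (fun b => ‖b‖) := Finset.le_sup' _ hb
    calc ‖z‖ = ‖(z - b) + b‖ := by ring_nf
      _ ≤ ‖z - b‖ + ‖b‖ := norm_add_le _ _
      _ ≤ R := by rw [hR]; linarith
  -- compact region and bound C₀
  set K := closedBall (0:ℂ) R \ ⋃ b ∈ Zfin, ball b ε with hK
  have hKcpt : IsCompact K :=
    (isCompact_closedBall _ _).diff (isOpen_biUnion fun b _ => isOpen_ball)
  have hqK : ∀ z ∈ K, q.eval z ≠ 0 := by
    intro z hz hq0'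
    exact hz.2 (mem_biUnion ((hmemZ z).2 hq0') (mem_ball_self hε0))
  have hcont : ContinuousOn (fun z : ℂ => ‖p.eval z‖ / ‖q.eval z‖) K :=
    ContinuousOn.div (p.continuous.norm.continuousOn) (q.continuous.norm.continuousOn)
      (fun z hz => norm_ne_zero_iff.mpr (hqK z hz))
  obtain ⟨C₀, hC₀⟩ := hKcpt.exists_bound_of_continuousOn hcont
  refine ⟨max C₀ 1, lt_of_lt_of_le one_pos (le_max_right _ _), fun c hc => ?_⟩
  have hc1 : 1 < c := lt_of_le_of_lt (le_max_right _ _) hc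
  have hc0 : 0 < c := lt_trans one_pos hc1
  set S := {z : ℂ | c * ‖q.eval z‖ < ‖p.eval z‖} with hS_def
  have hSopen : IsOpen S := isOpen_lt (continuous_const.mul q.continuous.norm) p.continuous.norm
  have hroot_S : ∀ b ∈ Zfin, b ∈ S := by
    intro b hb
    have hqb := (hmemZ b).1 hb
    simp only [hS_def, mem_setOf_eq, hqb, norm_zero, mul_zero]
    exact norm_pos_iff.2 (hnr b hqb)
  have hE_open : IsOpen {z : ℂ | R < ‖z‖} := isOpen_lt continuous_const continuous_norm
  have hScover : S ⊆ (⋃ b ∈ Zfin, ball b ε) ∪ {z : ℂ | R < ‖z‖} := by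
    intro z hzS
    by_contra hznot
    rw [Set.mem_union, not_or] at hznot
    obtain ⟨h1, h2⟩ := hznot
    have hzR : ‖z‖ ≤ R := not_lt.mp h2
    have hzK : z ∈ K := ⟨by rwa [mem_closedBall, dist_zero_right], h1⟩
    have hb := hC₀ z hzK
    have hq_pos : 0 < ‖q.eval z‖ := norm_pos_iff.2 (hqK z hzK)
    have h3 : ‖p.eval z‖ / ‖q.eval z‖ ≤ C₀ := le_trans (le_abs_self _) hb
    have hP : ‖p.eval z‖ ≤ C₀ * ‖q.eval z‖ := (div_le_iff₀ hq_pos).mp h3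
    have hC₀c : C₀ ≤ c := le_of_lt (lt_of_le_of_lt (le_max_left _ _) hc)
    have hzS' : c * ‖q.eval z‖ < ‖p.eval z‖ := hzS
    nlinarith
  have hcomp_sub : ∀ b ∈ Zfin, connectedComponentIn S b ⊆ ball b ε := by
    intro b hb
    refine IsPreconnected.subset_left_of_subset_union
      (v := (⋃ b' ∈ Zfin.erase b, ball b' ε) ∪ {z : ℂ | R < ‖z‖}) isOpen_ball
      (IsOpen.union (isOpen_biUnion fun b' _ => isOpen_ball) hE_open) ?_ ?_ ?_
      isPreconnected_connectedComponentIn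
    · rw [Set.disjoint_union_right]
      constructor
      · rw [Set.disjoint_iUnion₂_right]
        intro b' hb'
        exact hdisj b hb b' (Finset.mem_of_mem_erase hb') (Finset.ne_of_mem_erase hb').symm
      · refine Set.disjoint_left.2 fun z hz1 hz2 => ?_
        exact absurd (hball_le b hb z hz1) (not_le.mpr hz2)
    · intro z hz
      rcases hScover (connectedComponentIn_subset _ _ hz) with h | h
      · rw [Set.mem_iUnion₂] at h
        obtain ⟨b', hb', hzb'⟩ := h
        by_cases hbb : b' = b
        · exact Or.inl (hbb ▸ hzb')
        · exact Or.inr (Or.inl (Set.mem_biUnion (Finset.mem_erase.2 ⟨hbb, hb'⟩) hzb'))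
      · exact Or.inr (Or.inr h)
    · exact ⟨b, mem_connectedComponentIn (hroot_S b hb), mem_ball_self hε0⟩
  -- the unbounded component
  obtain ⟨R₁, hR₁0, hR₁⟩ := tail_bound p q hdeg c hc0.le
  set R₂ := max R₁ R with hR₂
  have hR₂0 : 0 < R₂ := lt_of_lt_of_le hR₁0 (le_max_left _ _)
  set T := {z : ℂ | R₂ < ‖z‖} with hT
  have hTsub : T ⊆ S := fun z hz => hR₁ z (lt_of_le_of_lt (le_max_left _ _) hz)
  have hTpre : IsPreconnected T := isPreconnected_norm_gt hR₂0.le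
  have hTunb : ¬ IsBounded T := by
    intro hbd
    obtain ⟨Cb, hCb⟩ := isBounded_iff_forall_norm_le.1 hbd
    have hn : ‖((max Cb R₂ + 1 : ℝ) : ℂ)‖ = max Cb R₂ + 1 := by
      rw [Complex.norm_real, Real.norm_eq_abs, abs_of_pos]
      have := le_max_right Cb R₂
      linarith
    have h1 : ((max Cb R₂ + 1 : ℝ) : ℂ) ∈ T := by
      rw [hT, mem_setOf_eq, hn]
      have := le_max_right Cb R₂
      linarith
    have h2 := hCb _ h1
    rw [hn] at h2
    have := le_max_left Cb R₂
    linarith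
  set a₀ : ℂ := ((R₂ + 1 : ℝ) : ℂ) with ha₀
  have ha₀T : a₀ ∈ T := by
    rw [hT, mem_setOf_eq, ha₀, Complex.norm_real, Real.norm_eq_abs, abs_of_pos (by linarith)]
    linarith
  have ha₀S : a₀ ∈ S := hTsub ha₀T
  have hTcomp : ∀ w ∈ T, T ⊆ connectedComponentIn S w := fun w hw =>
    hTpre.subset_connectedComponentIn hw hTsub
  constructor
  · refine ⟨connectedComponentIn S a₀, ⟨⟨a₀, ha₀S, rfl⟩, ?_⟩, ?_⟩
    · intro hbd
      exact hTunb (hbd.subset (hTcomp a₀ ha₀T))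
    · rintro V ⟨⟨z, hzS, rfl⟩, hVunb⟩
      have hex : ∃ w ∈ connectedComponentIn S z, R₂ < ‖w‖ := by
        by_contra hcon
        push_neg at hcon
        exact hVunb (isBounded_iff_forall_norm_le.2 ⟨R₂, hcon⟩)
      obtain ⟨w, hwU, hwn⟩ := hex
      have hwT : w ∈ T := hwn
      have e1 : connectedComponentIn S z = connectedComponentIn S w := connectedComponentIn_eq hwU
      have e2 : a₀ ∈ connectedComponentIn S w := hTcomp w hwT ha₀T
      rw [e1, connectedComponentIn_eq e2]
  · refine ⟨?_, ?_, ?_⟩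
    · intro b hb
      have hbZ : b ∈ Zfin := (hmemZ b).2 hb
      exact ⟨⟨b, hroot_S b hbZ, rfl⟩, isBounded_ball.subset (hcomp_sub b hbZ)⟩
    · intro b hb b' hb' heq
      by_contra hne
      have hbZ : b ∈ Zfin := (hmemZ b).2 hb
      have hb'Z : b' ∈ Zfin := (hmemZ b').2 hb'
      have heq' : connectedComponentIn S b = connectedComponentIn S b' := heq
      have h1 : b' ∈ connectedComponentIn S b := by
        rw [heq']
        exact mem_connectedComponentIn (hroot_S b' hb'Z)
      have h2 : b' ∈ ball b ε := hcomp_sub b hbZ h1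
      exact Set.disjoint_left.1 (hdisj b hbZ b' hb'Z hne) h2 (mem_ball_self hε0)
    · rintro V ⟨⟨z, hzS, rfl⟩, hVbd⟩
      obtain ⟨b, hbU, hqb⟩ := bounded_component_has_root p q hnr hc0 hzS hVbd
      exact ⟨b, hqb, (connectedComponentIn_eq hbU).symm⟩
end

section
/- Let p be a complex polynomial of degree n ≥ 1 such that the lemniscate Γ_{p,1} = {z ∈ ℂ : |p(z)| = 1} is proper, i.e. smooth and connected; in particular every zero of p lies in Ω₋ = {z : |p(z)| < 1}. Then there exists a function g : ℂ → ℂ, holomorphic and injective on Ω₊ = {z ∈ ℂ : |p(z)| > 1}, such that g(Ω₊) = {w ∈ ℂ : |w| > 1} and g(z)^n = p(z) for all z ∈ Ω₊. -/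
open Complex Set Metric Filter
namespace CRL
open scoped Classical

lemma constOn_of_locallyConst {X β : Type*} [TopologicalSpace X] {s : Set X}
    (hs : IsPreconnected s) (f : X → β)
    (h : ∀ x ∈ s, ∃ U, IsOpen U ∧ x ∈ U ∧ ∀ y ∈ U ∩ s, f y = f x)
    {a b : X} (ha : a ∈ s) (hb : b ∈ s) : f a = f b := by
  classical
  choose U hUo hxU hUc using h
  set V : X → Set X := fun x => if hx : x ∈ s then U x hx else ∅ with hV
  have hVo : ∀ x, IsOpen (V x) := by
    intro x; by_cases hx : x ∈ s <;> simp [hV, hx, hUo]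
  have hxV : ∀ x (hx : x ∈ s), x ∈ V x := by intro x hx; simp [hV, hx, hxU]
  have hVc : ∀ x (hx : x ∈ s), ∀ y ∈ V x ∩ s, f y = f x := by
    intro x hx; simp only [hV, dif_pos hx]; exact hUc x hx
  by_contra hne
  set A := ⋃ x ∈ {x | x ∈ s ∧ f x = f a}, V x with hA
  set B := ⋃ x ∈ {x | x ∈ s ∧ f x ≠ f a}, V x with hB
  have hAo : IsOpen A := isOpen_biUnion fun x _ => hVo x
  have hBo : IsOpen B := isOpen_biUnion fun x _ => hVo x
  have hcov : s ⊆ A ∪ B := by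
    intro x hx
    by_cases hfx : f x = f a
    · exact Or.inl (mem_biUnion ⟨hx, hfx⟩ (hxV x hx))
    · exact Or.inr (mem_biUnion ⟨hx, hfx⟩ (hxV x hx))
  have hane : (s ∩ A).Nonempty := ⟨a, ha, mem_biUnion ⟨ha, rfl⟩ (hxV a ha)⟩
  have hbne : (s ∩ B).Nonempty := ⟨b, hb, mem_biUnion ⟨hb, fun hh => hne hh.symm⟩ (hxV b hb)⟩
  obtain ⟨y, hys, hyA, hyB⟩ := hs A B hAo hBo hcov hane hbne
  obtain ⟨x1, hx1, hyV1⟩ := mem_iUnion₂.1 hyA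
  obtain ⟨x2, hx2, hyV2⟩ := mem_iUnion₂.1 hyB
  exact hx2.2 ((hVc x2 hx2.1 y ⟨hyV2, hys⟩).symm.trans
    ((hVc x1 hx1.1 y ⟨hyV1, hys⟩).trans hx1.2))

/-- `L` is a continuous logarithm of `φ` on `s`. -/
def IsLiftOn (φ L : ℝ → ℂ) (s : Set ℝ) : Prop :=
  ContinuousOn L s ∧ ∀ t ∈ s, Complex.exp (L t) = φ t

lemma ball_one_subset_slitPlane : ball (1 : ℂ) 1 ⊆ Complex.slitPlane := by
  intro z hz
  left
  have : ‖z - 1‖ < 1 := by simpa [Complex.dist_eq] using hz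
  have := neg_lt_of_abs_lt ((abs_re_le_norm (z - 1)).trans_lt this)
  simp only [Complex.sub_re, Complex.one_re] at this
  linarith

lemma telescope_prod (f : ℕ → ℂ) (hf : ∀ k, f k ≠ 0) (m : ℕ) :
    (∏ k ∈ Finset.range m, f (k + 1) / f k) = f m / f 0 := by
  induction m with
  | zero => rw [div_self (hf 0)]; simp
  | succ m ih =>
    rw [Finset.prod_range_succ, ih, div_mul_div_comm]
    rw [div_eq_div_iff (by exact mul_ne_zero (hf 0) (hf m)) (hf 0)]
    ring

/-- Existence of continuous logarithms along paths. -/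
lemma existsLiftOn {φ : ℝ → ℂ} (hc : ContinuousOn φ (Icc 0 1))
    (h0 : ∀ t ∈ Icc (0:ℝ) 1, φ t ≠ 0) :
    ∃ L, IsLiftOn φ L (Icc 0 1) ∧ L 0 = Complex.log (φ 0) := by
  obtain ⟨t₀, ht₀, hmin'⟩ := isCompact_Icc.exists_isMinOn (α := ℝ) ⟨0, by norm_num⟩ (hc.norm)
  have hmin : ∀ t ∈ Icc (0:ℝ) 1, ‖φ t₀‖ ≤ ‖φ t‖ := fun t ht => hmin' ht
  set ε : ℝ := ‖φ t₀‖ with hε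
  have hεpos : 0 < ε := norm_pos_iff.2 (h0 t₀ ht₀)
  obtain ⟨δ, hδpos, hδ⟩ := Metric.uniformContinuousOn_iff.1
    (isCompact_Icc.uniformContinuousOn_of_continuous hc) ε hεpos
  obtain ⟨m, hm⟩ := exists_nat_gt (1 / δ)
  have hmpos : 0 < (m : ℝ) := lt_trans (by positivity) hm
  have hmδ : 1 / (m : ℝ) < δ := by
    rw [div_lt_iff₀ hmpos]
    rw [div_lt_iff₀ hδpos] at hm
    linarith [hm]
  set a : ℕ → ℝ → ℝ := fun k t => min t (k / m) with ha
  have hamem : ∀ k, ∀ t ∈ Icc (0:ℝ) 1, a k t ∈ Icc (0:ℝ) 1 := by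
    intro k t ht
    constructor
    · exact le_min ht.1 (by positivity)
    · exact le_trans (min_le_left _ _) ht.2
  have hadist : ∀ k, ∀ t ∈ Icc (0:ℝ) 1, dist (a (k+1) t) (a k t) < δ := by
    intro k t _
    have hkk : ((k:ℝ))/m ≤ ((k:ℝ)+1)/m := by
      apply div_le_div_of_nonneg_right _ hmpos.le
      · linarith
    have h1 : a k t ≤ a (k+1) t := by
      have : a (k+1) t = min t (((k:ℝ)+1)/m) := by norm_num [ha]
      rw [this]
      exact min_le_min le_rfl hkk
    have h2 : a (k+1) t - a k t ≤ 1 / m := by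
      rcases le_total t ((k:ℝ) / m) with h | h
      · have h3 : a (k+1) t = t := by
          rw [show a (k+1) t = min t (((k:ℝ)+1)/m) from by norm_num [ha]]
          exact min_eq_left (h.trans hkk)
        have h2' : a k t = t := min_eq_left h
        rw [h3, h2']
        simp only [sub_self]
        positivity
      · have h2' : a k t = (k:ℝ)/m := min_eq_right h
        have : a (k+1) t ≤ ((k:ℝ)+1)/m := by
          rw [show a (k+1) t = min t (((k:ℝ)+1)/m) from by norm_num [ha]]
          exact min_le_right _ _
        rw [h2']
        calc a (k+1) t - (k:ℝ)/m ≤ ((k:ℝ)+1)/m - (k:ℝ)/m := by linarith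
          _ = 1 / m := by ring
    rw [Real.dist_eq, _root_.abs_of_nonneg (by linarith : (0:ℝ) ≤ a (k+1) t - a k t)]
    linarith
  have hratio : ∀ k, ∀ t ∈ Icc (0:ℝ) 1, φ (a (k+1) t) / φ (a k t) ∈ ball (1:ℂ) 1 := by
    intro k t ht
    have hk := h0 _ (hamem k t ht)
    have hd := hδ _ (hamem (k+1) t ht) _ (hamem k t ht) (hadist k t ht)
    have hεle : ε ≤ ‖φ (a k t)‖ := hmin _ (hamem k t ht)
    rw [mem_ball, dist_eq_norm]
    have : φ (a (k+1) t) / φ (a k t) - 1 = (φ (a (k+1) t) - φ (a k t)) / φ (a k t) := by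
      field_simp
    rw [this, norm_div]
    rw [div_lt_one (norm_pos_iff.2 hk)]
    calc ‖φ (a (k+1) t) - φ (a k t)‖ = dist (φ (a (k+1) t)) (φ (a k t)) := by
          rw [dist_eq_norm]
      _ < ε := hd
      _ ≤ ‖φ (a k t)‖ := hεle
  set L : ℝ → ℂ := fun t => Complex.log (φ 0) +
    ∑ k ∈ Finset.range m, Complex.log (φ (a (k+1) t) / φ (a k t)) with hL
  have hacont : ∀ k, ContinuousOn (fun t => φ (a k t)) (Icc 0 1) := by
    intro k
    apply hc.comp (Continuous.continuousOn (by continuity))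
    intro t ht; exact hamem k t ht
  refine ⟨L, ⟨?_, ?_⟩, ?_⟩
  · apply ContinuousOn.add continuousOn_const
    apply continuousOn_finset_sum
    intro k _
    apply ContinuousOn.clog
    · exact ContinuousOn.div (hacont (k+1)) (hacont k) (fun t ht => h0 _ (hamem k t ht))
    · intro t ht
      exact ball_one_subset_slitPlane (hratio k t ht)
  · intro t ht
    rw [hL]
    simp only
    rw [Complex.exp_add, Complex.exp_sum, Complex.exp_log (h0 0 (by norm_num))]
    have : ∀ k ∈ Finset.range m, Complex.exp (Complex.log (φ (a (k+1) t) / φ (a k t)))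
        = φ (a (k+1) t) / φ (a k t) := by
      intro k _
      apply Complex.exp_log
      intro hzero
      have := hratio k t ht
      rw [hzero] at this
      simp at this
    rw [Finset.prod_congr rfl this, telescope_prod (fun k => φ (a k t))
      (fun k => h0 _ (hamem k t ht)) m]
    have ham : a m t = t := min_eq_left (by
      rw [div_self (ne_of_gt hmpos)]; exact ht.2)
    have ha0 : a 0 t = 0 := by
      simp only [ha, Nat.cast_zero, zero_div]
      exact min_eq_right ht.1
    rw [ham, ha0, mul_div_assoc', mul_comm, mul_div_assoc, div_self (h0 0 (by norm_num)), mul_one]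
  · rw [hL]
    simp only
    have : ∀ k ∈ Finset.range m, Complex.log (φ (a (k+1) 0) / φ (a k 0)) = 0 := by
      intro k _
      have h1 : a (k+1) 0 = 0 := min_eq_left (by positivity)
      have h2 : a k 0 = 0 := min_eq_left (by positivity)
      rw [h1, h2, div_self (h0 0 (by norm_num)), Complex.log_one]
    rw [Finset.sum_congr rfl this]
    simp

/-- Uniqueness of increments of lifts on preconnected sets. -/
lemma liftOn_unique {φ L₁ L₂ : ℝ → ℂ} {s : Set ℝ} (hs : IsPreconnected s)
    (h1 : IsLiftOn φ L₁ s) (h2 : IsLiftOn φ L₂ s) {a b : ℝ} (ha : a ∈ s) (hb : b ∈ s) :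
    L₁ b - L₁ a = L₂ b - L₂ a := by
  set d : ℝ → ℂ := fun t => L₁ t - L₂ t with hd
  have hdc : ContinuousOn d s := h1.1.sub h2.1
  have hdval : ∀ t ∈ s, Complex.exp (d t) = 1 := by
    intro t ht
    rw [hd]
    simp only
    rw [Complex.exp_sub, h1.2 t ht, h2.2 t ht, div_self]
    rw [← h1.2 t ht]
    exact Complex.exp_ne_zero _
  have key : d a = d b := by
    apply constOn_of_locallyConst hs d _ ha hb
    intro x hx
    have := hdc x hx
    rw [Metric.continuousWithinAt_iff] at this
    obtain ⟨δ, hδpos, hδ⟩ := this 1 one_pos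
    refine ⟨Metric.ball x δ, isOpen_ball, mem_ball_self hδpos, ?_⟩
    rintro y ⟨hyb, hys⟩
    have hdy := hδ hys (by simpa [Metric.mem_ball, dist_comm] using hyb)
    obtain ⟨ky, hky⟩ := Complex.exp_eq_one_iff.1 (hdval y hys)
    obtain ⟨kx, hkx⟩ := Complex.exp_eq_one_iff.1 (hdval x hx)
    have : d y - d x = ((ky - kx : ℤ) : ℂ) * (2 * Real.pi * Complex.I) := by
      rw [hky, hkx]; push_cast; ring
    by_contra hne
    have hkne : ky ≠ kx := by
      intro h; apply hne; rw [hky, hkx, h]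
    have h1' : (1:ℝ) ≤ |(ky - kx : ℤ)| := by
      exact_mod_cast Int.one_le_abs (sub_ne_zero.2 hkne)
    have : (2 * Real.pi) ≤ dist (d y) (d x) := by
      rw [dist_eq_norm, this]
      rw [norm_mul]
      have h2' : ‖(2 * (Real.pi:ℂ) * Complex.I)‖ = 2 * Real.pi := by
        rw [norm_mul, norm_mul, Complex.norm_I, mul_one, Complex.norm_real,
          Real.norm_eq_abs, _root_.abs_of_nonneg Real.pi_nonneg]
        norm_num
      rw [h2']
      have : (1:ℝ) ≤ ‖((ky - kx : ℤ) : ℂ)‖ := by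
        rw [Complex.norm_intCast]
        exact_mod_cast h1'
      nlinarith [Real.pi_pos]
    linarith [Real.pi_gt_three]
  rw [hd] at key
  simp only at key
  linear_combination -key

/-- The increment of the continuous logarithm of `φ` along `[0,1]`. -/
noncomputable def inc (φ : ℝ → ℂ) : ℂ :=
  if h : ∃ L, IsLiftOn φ L (Icc 0 1) then h.choose 1 - h.choose 0 else 0

lemma inc_spec {φ L : ℝ → ℂ} (hL : IsLiftOn φ L (Icc 0 1)) : inc φ = L 1 - L 0 := by
  have h : ∃ L, IsLiftOn φ L (Icc 0 1) := ⟨L, hL⟩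
  rw [inc, dif_pos h]
  exact liftOn_unique isPreconnected_Icc h.choose_spec hL (by norm_num) (by norm_num)

lemma inc_congr {φ ψ : ℝ → ℂ} (h : ∀ t ∈ Icc (0:ℝ) 1, φ t = ψ t)
    {L : ℝ → ℂ} (hL : IsLiftOn φ L (Icc 0 1)) : inc ψ = inc φ := by
  rw [inc_spec hL, inc_spec (L := L) ⟨hL.1, fun t ht => (hL.2 t ht).trans (h t ht)⟩]

lemma inc_exp {φ : ℝ → ℂ} (hc : ContinuousOn φ (Icc 0 1))
    (h0 : ∀ t ∈ Icc (0:ℝ) 1, φ t ≠ 0) : Complex.exp (inc φ) = φ 1 / φ 0 := by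
  obtain ⟨L, hL, -⟩ := existsLiftOn hc h0
  rw [inc_spec hL, Complex.exp_sub, hL.2 1 (by norm_num), hL.2 0 (by norm_num)]

lemma inc_const (c : ℂ) : inc (fun _ => c) = 0 := by
  by_cases hc : c = 0
  · rw [inc, dif_neg]
    rintro ⟨L, -, hL2⟩
    exact Complex.exp_ne_zero _ ((hL2 0 (by norm_num)).trans hc)
  · rw [inc_spec (L := fun _ => Complex.log c)
      ⟨continuousOn_const, fun t _ => Complex.exp_log hc⟩]
    simp

lemma inc_mul {φ ψ : ℝ → ℂ} (hφc : ContinuousOn φ (Icc 0 1))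
    (hφ0 : ∀ t ∈ Icc (0:ℝ) 1, φ t ≠ 0) (hψc : ContinuousOn ψ (Icc 0 1))
    (hψ0 : ∀ t ∈ Icc (0:ℝ) 1, ψ t ≠ 0) :
    inc (fun t => φ t * ψ t) = inc φ + inc ψ := by
  obtain ⟨L, hL, -⟩ := existsLiftOn hφc hφ0
  obtain ⟨M, hM, -⟩ := existsLiftOn hψc hψ0
  have : IsLiftOn (fun t => φ t * ψ t) (fun t => L t + M t) (Icc 0 1) :=
    ⟨hL.1.add hM.1, fun t ht => by rw [Complex.exp_add, hL.2 t ht, hM.2 t ht]⟩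
  rw [inc_spec this, inc_spec hL, inc_spec hM]
  ring

/-- Comparison lemma: if `ψ` stays close to `φ`, the increments differ by boundary terms. -/
lemma inc_comparison {φ ψ : ℝ → ℂ} (hφc : ContinuousOn φ (Icc 0 1))
    (hφ0 : ∀ t ∈ Icc (0:ℝ) 1, φ t ≠ 0) (hψc : ContinuousOn ψ (Icc 0 1))
    (hclose : ∀ t ∈ Icc (0:ℝ) 1, ‖ψ t - φ t‖ < ‖φ t‖) :
    inc ψ = inc φ + Complex.log (ψ 1 / φ 1) - Complex.log (ψ 0 / φ 0) := by
  obtain ⟨L, hL, -⟩ := existsLiftOn hφc hφ0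
  have hratio : ∀ t ∈ Icc (0:ℝ) 1, ψ t / φ t ∈ ball (1:ℂ) 1 := by
    intro t ht
    rw [mem_ball, dist_eq_norm]
    have : ψ t / φ t - 1 = (ψ t - φ t) / φ t := by
      rw [sub_div, div_self (hφ0 t ht)]
    rw [this, norm_div, div_lt_one (norm_pos_iff.2 (hφ0 t ht))]
    exact hclose t ht
  have hr0 : ∀ t ∈ Icc (0:ℝ) 1, ψ t / φ t ≠ 0 := by
    intro t ht h
    have := hratio t ht
    rw [h] at this
    simp at this
  have hN : IsLiftOn ψ (fun t => L t + Complex.log (ψ t / φ t)) (Icc 0 1) := by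
    constructor
    · apply hL.1.add
      apply ContinuousOn.clog (hψc.div hφc hφ0)
      intro t ht
      exact ball_one_subset_slitPlane (hratio t ht)
    · intro t ht
      rw [Complex.exp_add, hL.2 t ht, Complex.exp_log (hr0 t ht), mul_div_assoc',
        mul_comm, mul_div_assoc, div_self (hφ0 t ht), mul_one]
  rw [inc_spec hN, inc_spec hL]
  ring

lemma inc_loop_int {φ : ℝ → ℂ} (hc : ContinuousOn φ (Icc 0 1))
    (h0 : ∀ t ∈ Icc (0:ℝ) 1, φ t ≠ 0) (hloop : φ 1 = φ 0) :
    ∃ k : ℤ, inc φ = k * (2 * Real.pi * Complex.I) := by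
  apply Complex.exp_eq_one_iff.1
  rw [inc_exp hc h0, hloop, div_self (h0 0 (by norm_num))]

section PathLemmas

variable {x y z : ℂ} (F : ℂ → ℂ)

lemma inc_path_trans (γ : Path x y) (δ : Path y z) (hF : Continuous F)
    (hγ : ∀ s ∈ range γ, F s ≠ 0) (hδ : ∀ s ∈ range δ, F s ≠ 0) :
    inc (fun t => F ((γ.trans δ).extend t))
      = inc (fun t => F (γ.extend t)) + inc (fun t => F (δ.extend t)) := by
  have hne : ∀ t ∈ Icc (0:ℝ) 1, F ((γ.trans δ).extend t) ≠ 0 := by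
    intro t ht
    rw [Path.extend_apply _ ht]
    have : (γ.trans δ) ⟨t, ht⟩ ∈ range γ ∪ range δ := by
      rw [← Path.trans_range]; exact mem_range_self _
    rcases this with h | h
    · exact hγ _ h
    · exact hδ _ h
  obtain ⟨M, hM, -⟩ := existsLiftOn (φ := fun t => F ((γ.trans δ).extend t))
    ((hF.comp (γ.trans δ).continuous_extend).continuousOn) hne
  have half_mem : ∀ t ∈ Icc (0:ℝ) 1, t / 2 ∈ Icc (0:ℝ) 1 := by
    intro t ht; constructor <;> [linarith [ht.1]; linarith [ht.2]]
  have half_mem' : ∀ t ∈ Icc (0:ℝ) 1, (t + 1) / 2 ∈ Icc (0:ℝ) 1 := by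
    intro t ht; constructor <;> [linarith [ht.1]; linarith [ht.2]]
  have key1 : ∀ t ∈ Icc (0:ℝ) 1, (γ.trans δ).extend (t / 2) = γ.extend t := by
    intro t ht
    rw [Path.extend_apply _ (half_mem t ht), Path.extend_apply _ ht]
    rw [Path.trans_apply]
    rw [dif_pos (by simpa using (by linarith [ht.2] : t / 2 ≤ 1/2))]
    congr 1
    ext
    push_cast
    ring
  have key2 : ∀ t ∈ Icc (0:ℝ) 1, (γ.trans δ).extend ((t + 1) / 2) = δ.extend t := by
    intro t ht
    rw [Path.extend_apply _ (half_mem' t ht), Path.extend_apply _ ht]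
    rw [Path.trans_apply]
    rcases eq_or_lt_of_le ht.1 with h0' | h0'
    · subst h0'
      rw [dif_pos (by norm_num)]
      have h1 : (⟨(0:ℝ), ht⟩ : unitInterval) = 0 := by ext; norm_num
      rw [h1, δ.source]
      have h2 : ∀ (hmem2 : 2 * (((0:ℝ)+1)/2) ∈ unitInterval),
          γ ⟨2 * (((0:ℝ)+1)/2), hmem2⟩ = y := by
        intro hmem2
        have : (⟨2 * (((0:ℝ)+1)/2), hmem2⟩ : unitInterval) = 1 := by ext; norm_num
        rw [this, γ.target]
      exact h2 _
    · rw [dif_neg (by intro hc; simp only at hc; nlinarith)]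
      congr 1
      ext
      push_cast
      ring
  have hN1 : IsLiftOn (fun t => F (γ.extend t)) (fun t => M (t / 2)) (Icc 0 1) := by
    constructor
    · exact hM.1.comp (continuousOn_id.div_const 2) half_mem
    · intro t ht
      rw [hM.2 _ (half_mem t ht)]
      show F ((γ.trans δ).extend (t / 2)) = F (γ.extend t)
      rw [key1 t ht]
  have hN2 : IsLiftOn (fun t => F (δ.extend t)) (fun t => M ((t + 1) / 2)) (Icc 0 1) := by
    constructor
    · exact hM.1.comp (ContinuousOn.div_const (by fun_prop) 2) half_mem'
    · intro t ht
      rw [hM.2 _ (half_mem' t ht)]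
      show F ((γ.trans δ).extend ((t + 1) / 2)) = F (δ.extend t)
      rw [key2 t ht]
  rw [inc_spec hM, inc_spec hN1, inc_spec hN2]
  norm_num

lemma inc_path_symm (γ : Path x y) (hF : Continuous F)
    (hγ : ∀ s ∈ range γ, F s ≠ 0) :
    inc (fun t => F (γ.symm.extend t)) = - inc (fun t => F (γ.extend t)) := by
  have hne : ∀ t ∈ Icc (0:ℝ) 1, F (γ.extend t) ≠ 0 := by
    intro t ht
    rw [Path.extend_apply _ ht]
    exact hγ _ (mem_range_self _)
  obtain ⟨M, hM, -⟩ := existsLiftOn (φ := fun t => F (γ.extend t))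
    ((hF.comp γ.continuous_extend).continuousOn) hne
  have hmem : ∀ t ∈ Icc (0:ℝ) 1, 1 - t ∈ Icc (0:ℝ) 1 := by
    intro t ht; constructor <;> [linarith [ht.2]; linarith [ht.1]]
  have key : ∀ t ∈ Icc (0:ℝ) 1, γ.symm.extend t = γ.extend (1 - t) := by
    intro t ht
    rw [Path.extend_apply _ ht, Path.extend_apply _ (hmem t ht)]
    show γ (unitInterval.symm ⟨t, ht⟩) = γ ⟨1 - t, hmem t ht⟩
    congr 1
  have hN : IsLiftOn (fun t => F (γ.symm.extend t)) (fun t => M (1 - t)) (Icc 0 1) := by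
    constructor
    · exact hM.1.comp (by fun_prop) hmem
    · intro t ht
      rw [hM.2 _ (hmem t ht)]
      show F (γ.extend (1 - t)) = F (γ.symm.extend t)
      rw [key t ht]
  rw [inc_spec hN, inc_spec hM]
  norm_num

end PathLemmas

lemma inc_multiset_prod {f : ℝ → ℂ} (hf : Continuous f) (S : Multiset ℂ)
    (hS : ∀ r ∈ S, ∀ t ∈ Icc (0:ℝ) 1, f t ≠ r) :
    ContinuousOn (fun t => (S.map fun r => f t - r).prod) (Icc 0 1) ∧
    (∀ t ∈ Icc (0:ℝ) 1, (S.map fun r => f t - r).prod ≠ 0) ∧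
    inc (fun t => (S.map fun r => f t - r).prod)
      = (S.map fun r => inc (fun t => f t - r)).sum := by
  induction S using Multiset.induction_on with
  | empty => simp only [Multiset.map_zero, Multiset.prod_zero, Multiset.sum_zero]
             exact ⟨continuousOn_const, fun t _ => one_ne_zero, inc_const 1⟩
  | cons a S ih =>
    have hS' : ∀ r ∈ S, ∀ t ∈ Icc (0:ℝ) 1, f t ≠ r := fun r hr => hS r (Multiset.mem_cons_of_mem hr)
    obtain ⟨ihc, ih0, ihinc⟩ := ih hS'
    have ha : ∀ t ∈ Icc (0:ℝ) 1, f t - a ≠ 0 := by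
      intro t ht
      exact sub_ne_zero.2 (hS a (Multiset.mem_cons_self _ _) t ht)
    have hprod : ∀ t, ((a ::ₘ S).map fun r => f t - r).prod
        = (f t - a) * (S.map fun r => f t - r).prod := by
      intro t; rw [Multiset.map_cons, Multiset.prod_cons]
    refine ⟨?_, ?_, ?_⟩
    · simp only [hprod]
      exact ((hf.continuousOn).sub continuousOn_const).mul ihc
    · intro t ht
      rw [hprod]
      exact mul_ne_zero (ha t ht) (ih0 t ht)
    · have := inc_mul (φ := fun t => f t - a) (ψ := fun t => (S.map fun r => f t - r).prod)
        ((hf.continuousOn).sub continuousOn_const) ha ihc ih0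
      calc inc (fun t => ((a ::ₘ S).map fun r => f t - r).prod)
          = inc (fun t => (f t - a) * (S.map fun r => f t - r).prod) := by
            simp only [hprod]
        _ = inc (fun t => f t - a) + inc (fun t => (S.map fun r => f t - r).prod) := this
        _ = (((a ::ₘ S)).map fun r => inc (fun t => f t - r)).sum := by
            rw [Multiset.map_cons, Multiset.sum_cons, ihinc]

section Lemniscate

variable {p : Polynomial ℂ}

lemma exists_radius (hdeg : 1 ≤ p.natDegree) :
    ∃ R : ℝ, 1 ≤ R ∧ ∀ z : ℂ, R ≤ ‖z‖ → 1 < ‖p.eval z‖ := by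
  have hdpos : 0 < p.degree := Polynomial.natDegree_pos_iff_degree_pos.1 hdeg
  have := (p.tendsto_norm_atTop hdpos (tendsto_norm_cocompact_atTop (E := ℂ))).eventually
    (eventually_gt_atTop 1)
  obtain ⟨t, htc, hts⟩ := Filter.mem_cocompact.1 this
  obtain ⟨R₀, hR₀⟩ := htc.isBounded.subset_closedBall 0
  refine ⟨max R₀ 1 + 1, by simp, fun z hz => ?_⟩
  apply hts
  intro hzt
  have := hR₀ hzt
  simp only [Metric.mem_closedBall, Complex.dist_eq, sub_zero] at this
  have h1 : max R₀ 1 + 1 ≤ ‖z‖ := hz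
  have h2 : R₀ ≤ max R₀ 1 := le_max_left _ _
  linarith

/-- The closed lemniscate region `{‖p‖ ≤ 1}` is preconnected when the lemniscate is connected. -/
lemma closed_region_preconnected (hdeg : 1 ≤ p.natDegree)
    (hconn : IsConnected {z : ℂ | ‖p.eval z‖ = 1}) :
    IsPreconnected {z : ℂ | ‖p.eval z‖ ≤ 1} := by
  obtain ⟨R, hR1, hR⟩ := exists_radius hdeg
  set G : Set ℂ := {z | ‖p.eval z‖ = 1} with hG
  have hGnorm : G = {z : ℂ | ‖p.eval z‖ = 1} := rfl
  set W : Set ℂ := {z | ‖p.eval z‖ < 1} with hW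
  set K : Set ℂ := {z | ‖p.eval z‖ ≤ 1} with hKdef
  have hWopen : IsOpen W := isOpen_lt (by fun_prop) continuous_const
  have hKclosed : IsClosed K := isClosed_le (by fun_prop) continuous_const
  have hWK : W ⊆ K := fun z hz => show ‖p.eval z‖ ≤ 1 from le_of_lt hz
  have hGK : G ⊆ K := fun z hz => le_of_eq hz
  obtain ⟨g₀, hg₀⟩ := hconn.nonempty
  -- every component of W has closure meeting G
  have key : ∀ x ∈ W, ∃ y, y ∈ closure (connectedComponentIn W x) ∧ y ∈ G := by
    intro x hx
    set C := connectedComponentIn W x with hC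
    have hCopen : IsOpen C := hWopen.connectedComponentIn
    have hCne : C.Nonempty := ⟨x, mem_connectedComponentIn hx⟩
    have hCW : C ⊆ W := connectedComponentIn_subset _ _
    have hCbdd : Bornology.IsBounded C := by
      apply (Metric.isBounded_closedBall (x := (0:ℂ)) (r := R)).subset
      intro z hz
      simp only [Metric.mem_closedBall, Complex.dist_eq, sub_zero]
      by_contra hzR
      push_neg at hzR
      have := hR z (by linarith)
      have := hCW hz
      rw [hW, mem_setOf_eq] at this
      linarith
    have hfront : (frontier C).Nonempty := by
      rw [nonempty_frontier_iff]
      refine ⟨hCne, fun h => ?_⟩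
      exact NormedSpace.unbounded_univ ℝ ℂ (h ▸ hCbdd)
    obtain ⟨y, hy⟩ := hfront
    have hyC : y ∉ C := by
      rw [hCopen.frontier_eq] at hy
      exact hy.2
    have hyK : ‖p.eval y‖ ≤ 1 := by
      have : y ∈ closure W := closure_mono hCW hy.1
      have hWsub : closure W ⊆ K := closure_minimal hWK hKclosed
      exact hWsub this
    have hyG : ‖p.eval y‖ = 1 := by
      rcases lt_or_eq_of_le hyK with hlt | heq
      · exfalso
        have hyW : y ∈ W := hlt
        obtain ⟨r, hrpos, hrball⟩ := Metric.isOpen_iff.1 hWopen y hyW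
        obtain ⟨w, hwC, hwb⟩ := Metric.mem_closure_iff.1 ((hCopen.frontier_eq ▸ hy).1) r hrpos
        have hunion : IsPreconnected (Metric.ball y r ∪ C) := by
          apply IsPreconnected.union w
          · rw [Metric.mem_ball, dist_comm]; exact hwb
          · exact hwC
          · exact (convex_ball y r).isPreconnected
          · exact isPreconnected_connectedComponentIn
        have hsub : Metric.ball y r ∪ C ⊆ C := by
          apply hunion.subset_connectedComponentIn (x := x)
          · exact Or.inr (mem_connectedComponentIn hx)
          · exact union_subset hrball hCW
        exact hyC (hsub (Or.inl (Metric.mem_ball_self hrpos)))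
      · exact heq
    exact ⟨y, (hCopen.frontier_eq ▸ hy).1, hyG⟩
  -- assemble
  set fam : Set (Set ℂ) := {s | s = G ∨ ∃ x ∈ W, s = closure (connectedComponentIn W x) ∪ G}
    with hfam
  have hKeq : K = ⋃₀ fam := by
    apply Set.eq_of_subset_of_subset
    · intro z hz
      rcases lt_or_eq_of_le (show ‖p.eval z‖ ≤ 1 from hz) with hlt | heq
      · have hzW : z ∈ W := hlt
        exact ⟨closure (connectedComponentIn W z) ∪ G, Or.inr ⟨z, hzW, rfl⟩,
          Or.inl (subset_closure (mem_connectedComponentIn hzW))⟩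
      · have hzG : z ∈ G := by
          rw [hG, mem_setOf_eq]
          exact heq
        exact ⟨G, Or.inl rfl, hzG⟩
    · intro z hz
      obtain ⟨s, hs, hzs⟩ := hz
      rcases hs with rfl | ⟨x, hx, rfl⟩
      · exact hGK hzs
      · rcases hzs with h | h
        · exact closure_minimal ((connectedComponentIn_subset _ _).trans hWK) hKclosed h
        · exact hGK h
  rw [hKeq]
  apply isPreconnected_sUnion g₀ fam
  · intro s hs
    rcases hs with rfl | ⟨x, hx, rfl⟩
    · exact hg₀
    · exact Or.inr hg₀
  · intro s hs
    have hGpre : IsPreconnected G := hconn.isPreconnected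
    rcases hs with rfl | ⟨x, hx, rfl⟩
    · exact hGpre
    · obtain ⟨y, hy1, hy2⟩ := key x hx
      exact IsPreconnected.union y hy1 hy2
        isPreconnected_connectedComponentIn.closure hGpre

/-- The exterior region `Ω₊` is preconnected. -/
lemma exterior_preconnected (hdeg : 1 ≤ p.natDegree) {R : ℝ} (hR1 : 1 ≤ R)
    (hR : ∀ z : ℂ, R ≤ ‖z‖ → 1 < ‖p.eval z‖) :
    IsPreconnected {z : ℂ | 1 < ‖p.eval z‖} := by
  set Om : Set ℂ := {z | 1 < ‖p.eval z‖} with hOm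
  have hOopen : IsOpen Om := isOpen_lt continuous_const (by fun_prop)
  set Far : Set ℂ := {z | R < ‖z‖} with hFar
  have hFarOm : Far ⊆ Om := fun z hz => hR z (le_of_lt hz)
  have hFarpre : IsPreconnected Far := by
    have himg : Far = Complex.exp '' {z | Real.log R < z.re} := by
      apply Set.eq_of_subset_of_subset
      · intro w hw
        have hw0 : w ≠ 0 := by
          intro h
          rw [hFar, mem_setOf_eq, h] at hw
          simp at hw
          linarith
        refine ⟨Complex.log w, ?_, Complex.exp_log hw0⟩
        rw [mem_setOf_eq, Complex.log_re]
        apply Real.log_lt_log (by linarith)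
        exact hw
      · rintro w ⟨u, hu, rfl⟩
        rw [hFar, mem_setOf_eq, Complex.norm_exp]
        calc R = Real.exp (Real.log R) := (Real.exp_log (by linarith)).symm
          _ < Real.exp u.re := Real.exp_lt_exp.2 hu
    rw [himg]
    exact ((convex_halfSpace_re_gt _).isPreconnected).image _ (Complex.continuous_exp.continuousOn)
  have hfarpt : (R + 1 : ℂ) ∈ Far := by
    rw [hFar, mem_setOf_eq]
    have : ‖(R + 1 : ℂ)‖ = |R + 1| := by
      rw [show ((R:ℂ) + 1) = ((R + 1 : ℝ) : ℂ) by push_cast; ring, Complex.norm_real,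
        Real.norm_eq_abs]
    rw [this, abs_of_pos (by linarith)]
    linarith
  have key : ∀ x ∈ Om, ∃ w ∈ connectedComponentIn Om x, w ∈ Far := by
    intro x hx
    set C := connectedComponentIn Om x with hC
    have hCopen : IsOpen C := hOopen.connectedComponentIn
    have hCOm : C ⊆ Om := connectedComponentIn_subset _ _
    by_contra hcon
    push_neg at hcon
    have hCbdd : Bornology.IsBounded C := by
      apply (Metric.isBounded_closedBall (x := (0:ℂ)) (r := R)).subset
      intro z hz
      simp only [Metric.mem_closedBall, Complex.dist_eq, sub_zero]
      by_contra hzR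
      push_neg at hzR
      exact absurd (by rw [hFar, mem_setOf_eq]; exact hzR) (hcon z hz)
    -- frontier norm ≤ 1
    have hfb : ∀ y ∈ frontier C, ‖p.eval y‖ ≤ 1 := by
      intro y hy
      have hyC : y ∉ C := by rw [hCopen.frontier_eq] at hy; exact hy.2
      have hycl : y ∈ closure C := (hCopen.frontier_eq ▸ hy).1
      have hyK : 1 ≤ ‖p.eval y‖ := by
        have : y ∈ closure Om := closure_mono hCOm hycl
        have : closure Om ⊆ {z | 1 ≤ ‖p.eval z‖} :=
          closure_minimal (fun z hz => show (1:ℝ) ≤ ‖p.eval z‖ from le_of_lt hz)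
            (isClosed_le continuous_const (by fun_prop))
        exact this ‹y ∈ closure Om›
      rcases eq_or_lt_of_le hyK with heq | hlt
      · exact le_of_eq heq.symm
      · exfalso
        have hyOm : y ∈ Om := hlt
        obtain ⟨r, hrpos, hrball⟩ := Metric.isOpen_iff.1 hOopen y hyOm
        obtain ⟨w, hwC, hwb⟩ := Metric.mem_closure_iff.1 hycl r hrpos
        have hunion : IsPreconnected (Metric.ball y r ∪ C) := by
          apply IsPreconnected.union w
          · rw [Metric.mem_ball, dist_comm]; exact hwb
          · exact hwC
          · exact (convex_ball y r).isPreconnected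
          · exact isPreconnected_connectedComponentIn
        have hsub : Metric.ball y r ∪ C ⊆ C := by
          apply hunion.subset_connectedComponentIn (x := x)
          · exact Or.inr (mem_connectedComponentIn hx)
          · exact union_subset hrball hCOm
        exact hyC (hsub (Or.inl (Metric.mem_ball_self hrpos)))
    have := Complex.norm_le_of_forall_mem_frontier_norm_le hCbdd
      (p.differentiable.diffContOnCl) hfb (subset_closure (mem_connectedComponentIn hx))
    rw [hOm, mem_setOf_eq] at hx
    linarith
  -- assemble
  set fam : Set (Set ℂ) := {s | ∃ x ∈ Om, s = connectedComponentIn Om x ∪ Far} with hfam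
  have hOeq : Om = ⋃₀ fam ∪ Far := by
    apply Set.eq_of_subset_of_subset
    · intro z hz
      exact Or.inl ⟨connectedComponentIn Om z ∪ Far, ⟨z, hz, rfl⟩,
        Or.inl (mem_connectedComponentIn hz)⟩
    · intro z hz
      rcases hz with ⟨s, ⟨x, hx, rfl⟩, hzs⟩ | hz
      · rcases hzs with h | h
        · exact connectedComponentIn_subset _ _ h
        · exact hFarOm h
      · exact hFarOm hz
  have hpre : IsPreconnected (⋃₀ (insert Far fam)) := by
    apply isPreconnected_sUnion ((R + 1 : ℂ)) _
    · intro s hs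
      rcases hs with rfl | ⟨x, hx, rfl⟩
      · exact hfarpt
      · exact Or.inr hfarpt
    · intro s hs
      rcases hs with rfl | ⟨x, hx, rfl⟩
      · exact hFarpre
      · obtain ⟨w, hw1, hw2⟩ := key x hx
        exact IsPreconnected.union w hw1 hw2 isPreconnected_connectedComponentIn hFarpre
  have : ⋃₀ (insert Far fam) = ⋃₀ fam ∪ Far := by
    rw [Set.sUnion_insert]
    exact Set.union_comm _ _
  rw [hOeq, ← this]
  exact hpre

end Lemniscate

section Monodromy

variable {p : Polynomial ℂ} {n : ℕ}

lemma eval_eq_prod_roots (hp0 : p ≠ 0) (z : ℂ) :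
    p.eval z = p.leadingCoeff * ((p.roots.map fun r => z - r)).prod := by
  conv_lhs => rw [← Polynomial.C_leadingCoeff_mul_prod_multiset_X_sub_C (p := p) IsAlgClosed.card_roots_eq_natDegree]
  rw [Polynomial.eval_mul, Polynomial.eval_C, Polynomial.eval_multiset_prod, Multiset.map_map]
  have : Multiset.map (Polynomial.eval z ∘ fun a => Polynomial.X - Polynomial.C a) p.roots
      = Multiset.map (fun r => z - r) p.roots := by
    apply Multiset.map_congr rfl
    intro r _
    simp
  rw [this]

/-- Monodromy: the increment of `log p` along a loop in `Ω₊` is a multiple of `n·2πi`. -/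
lemma monodromy (hn : 1 ≤ n) (hdeg : p.natDegree = n)
    (hKpre : IsPreconnected {z : ℂ | ‖p.eval z‖ ≤ 1})
    {z₀ : ℂ} (α : Path z₀ z₀) (hα : ∀ s ∈ range α, 1 < ‖p.eval s‖) :
    ∃ k : ℤ, inc (fun t => p.eval (α.extend t)) = (n : ℂ) * (k * (2 * Real.pi * Complex.I)) := by
  have hp0 : p ≠ 0 := by
    intro h
    rw [h, Polynomial.natDegree_zero] at hdeg
    omega
  have hc0 : p.leadingCoeff ≠ 0 := Polynomial.leadingCoeff_ne_zero.2 hp0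
  set f : ℝ → ℂ := ⇑α.extend with hf
  have hfc : Continuous f := α.continuous_extend
  have hfrange : ∀ t ∈ Icc (0:ℝ) 1, 1 < ‖p.eval (f t)‖ := by
    intro t ht
    rw [hf, Path.extend_apply _ ht]
    exact hα _ (mem_range_self _)
  have hroots_mem : ∀ r ∈ p.roots, ‖p.eval r‖ ≤ 1 := by
    intro r hr
    have : p.eval r = 0 := (Polynomial.mem_roots hp0).1 hr
    rw [this]
    simp
  have hne : ∀ r ∈ p.roots, ∀ t ∈ Icc (0:ℝ) 1, f t ≠ r := by
    intro r hr t ht h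
    have h1 := hfrange t ht
    rw [h] at h1
    linarith [hroots_mem r hr]
  have hcard : Multiset.card p.roots = n := by
    rw [IsAlgClosed.card_roots_eq_natDegree, hdeg]
  -- the winding number function
  set u : ℂ → ℂ := fun x => inc (fun t => f t - x) with hu
  have hwind : ∀ x, (∀ t ∈ Icc (0:ℝ) 1, f t ≠ x) → ∃ k : ℤ,
      u x = k * (2 * Real.pi * Complex.I) := by
    intro x hx
    have hl : (fun t : ℝ => f t - x) 1 = (fun t : ℝ => f t - x) 0 := by
      show f 1 - x = f 0 - x
      rw [hf, Path.extend_one, Path.extend_zero]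
    exact inc_loop_int ((hfc.continuousOn).sub continuousOn_const)
      (fun t ht => sub_ne_zero.2 (hx t ht)) hl
  -- local constancy of u on the complement of the loop image
  have hloc : ∀ x, (∀ t ∈ Icc (0:ℝ) 1, f t ≠ x) →
      ∃ δ > 0, ∀ y ∈ Metric.ball x δ, u y = u x := by
    intro x hx
    obtain ⟨t₁, ht₁, hmin⟩ := (isCompact_Icc (a := (0:ℝ)) (b := 1)).exists_isMinOn
      ⟨0, by norm_num⟩
      (((hfc.continuousOn (s := Icc (0:ℝ) 1)).sub continuousOn_const).norm)
    set δ := ‖f t₁ - x‖ with hδ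
    have hδpos : 0 < δ := norm_pos_iff.2 (sub_ne_zero.2 (hx t₁ ht₁))
    refine ⟨δ, hδpos, fun y hy => ?_⟩
    have hcomp := inc_comparison (φ := fun t => f t - x) (ψ := fun t => f t - y)
      ((hfc.continuousOn).sub continuousOn_const)
      (fun t ht => sub_ne_zero.2 (hx t ht))
      ((hfc.continuousOn).sub continuousOn_const)
      (fun t ht => by
        have : (f t - y) - (f t - x) = x - y := by ring
        rw [this]
        calc ‖x - y‖ = dist y x := by rw [dist_eq_norm, norm_sub_rev]
          _ < δ := hy
          _ ≤ ‖f t - x‖ := hmin ht)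
    have hloop : f 1 = f 0 := by rw [hf, Path.extend_one, Path.extend_zero]
    rw [hu]
    simp only
    rw [hcomp]
    have h10 : (fun t => f t - y) 1 / (fun t => f t - x) 1
        = (fun t => f t - y) 0 / (fun t => f t - x) 0 := by
      simp only
      rw [hloop]
    rw [h10]
    ring
  -- u is constant on the closed region
  have hconst : ∀ r ∈ p.roots, ∀ r' ∈ p.roots, u r = u r' := by
    intro r hr r' hr'
    have hKmem : ∀ s ∈ p.roots, s ∈ {z : ℂ | ‖p.eval z‖ ≤ 1} := fun s hs => hroots_mem s hs
    have hnex : ∀ x ∈ {z : ℂ | ‖p.eval z‖ ≤ 1}, ∀ t ∈ Icc (0:ℝ) 1, f t ≠ x := by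
      intro x hxK t ht h
      have := hfrange t ht
      rw [h] at this
      have : (1:ℝ) < 1 := lt_of_lt_of_le this hxK
      linarith
    apply constOn_of_locallyConst hKpre u _ (hKmem r hr) (hKmem r' hr')
    intro x hxK
    obtain ⟨δ, hδpos, hδ⟩ := hloc x (hnex x hxK)
    exact ⟨Metric.ball x δ, isOpen_ball, mem_ball_self hδpos, fun y hy => hδ y hy.1⟩
  -- decompose inc of p∘α into the sum over roots
  obtain ⟨hprodc, hprod0, hprodinc⟩ := inc_multiset_prod hfc p.roots hne
  have heq : (fun t => p.eval (f t))
      = fun t => p.leadingCoeff * ((p.roots.map fun r => f t - r)).prod := by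
    funext t
    exact eval_eq_prod_roots hp0 (f t)
  have hinc1 : inc (fun t => p.eval (f t))
      = inc (fun t => ((p.roots.map fun r => f t - r)).prod) := by
    rw [heq]
    rw [inc_mul continuousOn_const (fun t _ => hc0) hprodc hprod0, inc_const]
    ring
  -- pick a root
  have hrne : p.roots ≠ 0 := by
    intro h
    rw [h] at hcard
    simp at hcard
    omega
  obtain ⟨r₀, hr₀⟩ := Multiset.exists_mem_of_ne_zero hrne
  obtain ⟨k₀, hk₀⟩ := hwind r₀ (fun t ht => hne r₀ hr₀ t ht)
  refine ⟨k₀, ?_⟩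
  rw [hinc1, hprodinc]
  have hmapconst : p.roots.map (fun r => inc (fun t => f t - r))
      = p.roots.map (fun _ => (k₀ : ℂ) * (2 * Real.pi * Complex.I)) := by
    apply Multiset.map_congr rfl
    intro r hr
    show u r = _
    rw [hconst r hr r₀ hr₀]
    exact hk₀
  rw [hmapconst, Multiset.map_const', Multiset.sum_replicate, hcard, nsmul_eq_mul]

end Monodromy

lemma farPreconnected {R : ℝ} (hR : 0 < R) : IsPreconnected {z : ℂ | R < ‖z‖} := by
  have himg : {z : ℂ | R < ‖z‖} = Complex.exp '' {z | Real.log R < z.re} := by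
    apply Set.eq_of_subset_of_subset
    · intro w hw
      have hw' : R < ‖w‖ := hw
      have hw0 : w ≠ 0 := by
        intro h
        rw [h] at hw'
        simp at hw'
        linarith
      refine ⟨Complex.log w, ?_, Complex.exp_log hw0⟩
      rw [mem_setOf_eq, Complex.log_re]
      exact Real.log_lt_log hR hw'
    · rintro w ⟨u, hu, rfl⟩
      rw [mem_setOf_eq, Complex.norm_exp]
      calc R = Real.exp (Real.log R) := (Real.exp_log hR).symm
        _ < Real.exp u.re := Real.exp_lt_exp.2 hu
  rw [himg]
  exact ((convex_halfSpace_re_gt _).isPreconnected).image _ (Complex.continuous_exp.continuousOn)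

lemma ball_infinite (z : ℂ) {r : ℝ} (hr : 0 < r) : (Metric.ball z r).Infinite := by
  have hsub : (fun t : ℝ => z + (t * r / 2 : ℝ)) '' (Ioo (0:ℝ) 1) ⊆ Metric.ball z r := by
    rintro w ⟨t, ht, rfl⟩
    rw [Metric.mem_ball, Complex.dist_eq]
    have : z + (t * r / 2 : ℝ) - z = ((t * r / 2 : ℝ) : ℂ) := by ring
    rw [this, Complex.norm_real, Real.norm_eq_abs, _root_.abs_of_nonneg (by nlinarith [ht.1.le, hr.le])]
    nlinarith [ht.1, ht.2, hr]
  apply Set.Infinite.mono hsub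
  apply Set.Infinite.image
  · intro a _ b _ h
    have : (a * r / 2 : ℝ) = b * r / 2 := by
      have := congrArg Complex.re h
      simpa using this
    have hr2 : r / 2 ≠ 0 := by positivity
    field_simp at this
    exact this
  · exact Set.Ioo_infinite zero_lt_one

end CRL

open Complex Set Metric Filter Topology CRL in
set_option maxHeartbeats 1000000 in
/-- Let `p` have degree `n ≥ 1` with `Γ_{p,1}` proper (smooth and connected).
Then `z ↦ p(z)^{1/n}` is a well-defined conformal map from
`Ω₊ = {z : |p(z)| > 1}` onto the exterior of the unit disk: there is `g`
holomorphic and injective on `Ω₊` with `g(Ω₊) = {w : |w| > 1}` and `g^n = p`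
on `Ω₊`. -/
theorem conformal_root_on_circle_domain_at_infinity
    (p : Polynomial ℂ) (n : ℕ) (hn : 1 ≤ n) (hdeg : p.natDegree = n)
    (hsmooth : ∀ z : ℂ, ‖p.eval z‖ = 1 → p.derivative.eval z ≠ 0)
    (hconn : IsConnected {z : ℂ | ‖p.eval z‖ = 1}) :
    ∃ g : ℂ → ℂ,
      DifferentiableOn ℂ g {z : ℂ | 1 < ‖p.eval z‖} ∧
      Set.InjOn g {z : ℂ | 1 < ‖p.eval z‖} ∧
      g '' {z : ℂ | 1 < ‖p.eval z‖} = {w : ℂ | 1 < ‖w‖} ∧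
      ∀ z : ℂ, 1 < ‖p.eval z‖ → g z ^ n = p.eval z := by
  classical
  have hdeg1 : 1 ≤ p.natDegree := by omega
  have hnC : (n : ℂ) ≠ 0 := by
    simp only [ne_eq, Nat.cast_eq_zero]
    omega
  obtain ⟨R, hR1, hR⟩ := exists_radius hdeg1
  set Om : Set ℂ := {z | 1 < ‖p.eval z‖} with hOm
  have hOmabs : {z : ℂ | 1 < ‖p.eval z‖} = Om := rfl
  have hEabs : {w : ℂ | 1 < ‖w‖} = {w : ℂ | 1 < ‖w‖} := rfl
  have hOopen : IsOpen Om := isOpen_lt continuous_const (by fun_prop)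
  have hpcont : Continuous (fun z : ℂ => p.eval z) := by fun_prop
  have hOpre : IsPreconnected Om := exterior_preconnected hdeg1 hR1 hR
  have hx₀norm : ‖(R + 1 : ℂ)‖ = R + 1 := by
    rw [show ((R:ℂ) + 1) = ((R + 1 : ℝ) : ℂ) by push_cast; ring, Complex.norm_real,
      Real.norm_eq_abs, abs_of_pos (by linarith)]
  set x₀ : ℂ := (R + 1 : ℂ) with hx₀def
  have hx₀ : x₀ ∈ Om := hR x₀ (by rw [hx₀norm]; linarith)
  have hOconn : IsConnected Om := ⟨⟨x₀, hx₀⟩, hOpre⟩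
  have hpath : IsPathConnected Om := hOopen.isConnected_iff_isPathConnected.mp hOconn
  have hKpre : IsPreconnected {z : ℂ | ‖p.eval z‖ ≤ 1} :=
    closed_region_preconnected hdeg1 hconn
  -- choose paths
  have hjoin : ∀ z, z ∈ Om → ∃ γ : Path x₀ z, ∀ t, γ t ∈ Om := by
    intro z hz
    exact hpath.joinedIn x₀ hx₀ z hz
  choose γp hγp using hjoin
  -- basic nonvanishing facts
  have hOmne : ∀ z ∈ Om, p.eval z ≠ 0 := by
    intro z hz h
    rw [hOm, mem_setOf_eq, h] at hz
    norm_num at hz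
  have hγcont : ∀ {z : ℂ} (γ : Path x₀ z),
      ContinuousOn (fun t => p.eval (γ.extend t)) (Icc 0 1) :=
    fun γ => (hpcont.comp γ.continuous_extend).continuousOn
  have hγne : ∀ {z : ℂ} (γ : Path x₀ z), (∀ t, γ t ∈ Om) →
      ∀ t ∈ Icc (0:ℝ) 1, p.eval (γ.extend t) ≠ 0 := by
    intro z γ hγ t ht
    rw [Path.extend_apply _ ht]
    exact hOmne _ (hγ _)
  -- the root at the base point
  set w₀ : ℂ := Complex.exp (Complex.log (p.eval x₀) / n) with hw₀def
  have hw₀n : w₀ ^ n = p.eval x₀ := by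
    rw [hw₀def, ← Complex.exp_nat_mul, mul_div_cancel₀ _ hnC,
      Complex.exp_log (hOmne x₀ hx₀)]
  -- definition of g
  set g : ℂ → ℂ := fun z =>
    if hz : z ∈ Om then
      w₀ * Complex.exp (inc (fun t => p.eval ((γp z hz).extend t)) / n)
    else 0 with hgdef
  have hval : ∀ z (hz : z ∈ Om),
      g z = w₀ * Complex.exp (inc (fun t => p.eval ((γp z hz).extend t)) / n) := by
    intro z hz
    rw [hgdef]
    exact dif_pos hz
  -- g^n = p
  have hpow : ∀ z ∈ Om, g z ^ n = p.eval z := by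
    intro z hz
    rw [hval z hz, mul_pow, hw₀n, ← Complex.exp_nat_mul, mul_div_cancel₀ _ hnC,
      inc_exp (hγcont (γp z hz)) (hγne (γp z hz) (hγp z hz))]
    rw [Path.extend_one, Path.extend_zero]
    field_simp [hOmne x₀ hx₀]
  -- path independence
  have hindep : ∀ z (hz : z ∈ Om) (γ : Path x₀ z), (∀ t, γ t ∈ Om) →
      Complex.exp (inc (fun t => p.eval (γ.extend t)) / n)
        = Complex.exp (inc (fun t => p.eval ((γp z hz).extend t)) / n) := by
    intro z hz γ hγ
    set δ := γp z hz with hδ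
    set α : Path x₀ x₀ := γ.trans δ.symm with hα
    have hαmem : ∀ s ∈ range α, 1 < ‖p.eval s‖ := by
      intro s hs
      rw [hα] at hs
      rw [Path.trans_range] at hs
      rcases hs with h | h
      · obtain ⟨t, rfl⟩ := h
        exact hγ t
      · rw [Path.symm_range] at h
        obtain ⟨t, rfl⟩ := h
        exact hγp z hz t
    obtain ⟨k, hk⟩ := monodromy hn hdeg hKpre α hαmem
    have hγrange : ∀ s ∈ range γ, p.eval s ≠ 0 := by
      rintro s ⟨t, rfl⟩; exact hOmne _ (hγ t)
    have hδrange : ∀ s ∈ range δ.symm, p.eval s ≠ 0 := by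
      rintro s hs
      rw [Path.symm_range] at hs
      obtain ⟨t, rfl⟩ := hs
      exact hOmne _ (hγp z hz t)
    have hsplit : inc (fun t => p.eval (α.extend t))
        = inc (fun t => p.eval (γ.extend t)) + inc (fun t => p.eval (δ.symm.extend t)) :=
      inc_path_trans (fun s => p.eval s) γ δ.symm hpcont hγrange hδrange
    have hsymm : inc (fun t => p.eval (δ.symm.extend t))
        = - inc (fun t => p.eval (δ.extend t)) := by
      apply inc_path_symm (fun s => p.eval s) δ hpcont
      rintro s ⟨t, rfl⟩
      exact hOmne _ (hγp z hz t)
    have hdiff : inc (fun t => p.eval (γ.extend t)) - inc (fun t => p.eval (δ.extend t))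
        = (n : ℂ) * (k * (2 * Real.pi * Complex.I)) := by
      rw [← hk, hsplit, hsymm]
      ring
    have : inc (fun t => p.eval (γ.extend t)) / n
        = inc (fun t => p.eval (δ.extend t)) / n + k * (2 * Real.pi * Complex.I) := by
      field_simp
      linear_combination hdiff
    rw [this, Complex.exp_add, Complex.exp_int_mul_two_pi_mul_I, mul_one]
  -- local formula and differentiability
  have hloc : ∀ z₁ ∈ Om, ∃ ρ > 0, Metric.ball z₁ ρ ⊆ Om ∧
      ∀ z ∈ Metric.ball z₁ ρ,
        g z = g z₁ * Complex.exp (Complex.log (p.eval z / p.eval z₁) / n) := by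
    intro z₁ h1
    have hpc : ContinuousAt (fun z : ℂ => p.eval z) z₁ := hpcont.continuousAt
    have hpos : 0 < ‖p.eval z₁‖ := norm_pos_iff.2 (hOmne z₁ h1)
    obtain ⟨ρ₁, hρ₁pos, hρ₁⟩ := Metric.continuousAt_iff.1 hpc ‖p.eval z₁‖ hpos
    obtain ⟨ρ₂, hρ₂pos, hρ₂⟩ := Metric.isOpen_iff.1 hOopen z₁ h1
    set ρ := min ρ₁ ρ₂ with hρ
    have hρpos : 0 < ρ := lt_min hρ₁pos hρ₂pos
    have hballOm : Metric.ball z₁ ρ ⊆ Om := (Metric.ball_subset_ball (min_le_right _ _)).trans hρ₂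
    have hballclose : ∀ z ∈ Metric.ball z₁ ρ, ‖p.eval z - p.eval z₁‖ < ‖p.eval z₁‖ := by
      intro z hz
      have := hρ₁ (show dist z z₁ < ρ₁ from lt_of_lt_of_le hz (min_le_left _ _))
      rwa [dist_eq_norm] at this
    refine ⟨ρ, hρpos, hballOm, ?_⟩
    intro z hz
    have hzOm : z ∈ Om := hballOm hz
    have hbp : IsPathConnected (Metric.ball z₁ ρ) :=
      (convex_ball z₁ ρ).isPathConnected ⟨z₁, Metric.mem_ball_self hρpos⟩
    obtain ⟨σ, hσ⟩ := hbp.joinedIn z₁ (Metric.mem_ball_self hρpos) z hz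
    set γ : Path x₀ z := (γp z₁ h1).trans σ with hγdef
    have hγmem : ∀ t, γ t ∈ Om := by
      intro t
      have : γ t ∈ range γ := mem_range_self _
      rw [hγdef, Path.trans_range] at this
      rcases this with h | h
      · obtain ⟨t', ht'⟩ := h
        rw [← ht']
        exact hγp z₁ h1 t'
      · obtain ⟨t', ht'⟩ := h
        rw [← ht']
        exact hballOm (hσ t')
    have hinct : inc (fun t => p.eval (γ.extend t))
        = inc (fun t => p.eval ((γp z₁ h1).extend t)) + inc (fun t => p.eval (σ.extend t)) := by
      apply inc_path_trans (fun s => p.eval s) _ _ hpcont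
      · rintro s ⟨t, rfl⟩
        exact hOmne _ (hγp z₁ h1 t)
      · rintro s ⟨t, rfl⟩
        exact hOmne _ (hballOm (hσ t))
    have hσinc : inc (fun t => p.eval (σ.extend t)) = Complex.log (p.eval z / p.eval z₁) := by
      have hcomp := inc_comparison (φ := fun _ => p.eval z₁)
        (ψ := fun t => p.eval (σ.extend t)) continuousOn_const
        (fun t _ => hOmne z₁ h1) ((hpcont.comp σ.continuous_extend).continuousOn)
        (fun t ht => by
          have : σ.extend t ∈ Metric.ball z₁ ρ := by
            rw [Path.extend_apply _ ht]
            exact hσ _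
          exact hballclose _ this)
      rw [hcomp, inc_const]
      simp only [Path.extend_one, Path.extend_zero, Path.source, Path.target]
      rw [div_self (hOmne z₁ h1), Complex.log_one]
      ring
    calc g z = w₀ * Complex.exp (inc (fun t => p.eval ((γp z hzOm).extend t)) / n) :=
          hval z hzOm
      _ = w₀ * Complex.exp (inc (fun t => p.eval (γ.extend t)) / n) := by
          rw [hindep z hzOm γ hγmem]
      _ = g z₁ * Complex.exp (Complex.log (p.eval z / p.eval z₁) / n) := by
          rw [hinct, hσinc, hval z₁ h1, add_div, Complex.exp_add]
          ring
  have hdiffAt : ∀ z₁ ∈ Om, DifferentiableAt ℂ g z₁ := by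
    intro z₁ h1
    obtain ⟨ρ, hρpos, hballOm, hform⟩ := hloc z₁ h1
    have hratio : DifferentiableAt ℂ (fun z => p.eval z / p.eval z₁) z₁ :=
      (p.differentiableAt).div_const _
    have hmem : (fun z => p.eval z / p.eval z₁) z₁ ∈ Complex.slitPlane := by
      simp only [div_self (hOmne z₁ h1)]
      exact CRL.ball_one_subset_slitPlane (Metric.mem_ball_self one_pos)
    have hlog : DifferentiableAt ℂ (fun z => Complex.log (p.eval z / p.eval z₁)) z₁ :=
      hratio.clog hmem
    have hfdiff : DifferentiableAt ℂ
        (fun z => g z₁ * Complex.exp (Complex.log (p.eval z / p.eval z₁) / n)) z₁ := by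
      apply DifferentiableAt.const_mul
      exact (Complex.differentiable_exp.differentiableAt).comp z₁ (hlog.div_const _)
    apply hfdiff.congr_of_eventuallyEq
    filter_upwards [Metric.ball_mem_nhds z₁ hρpos] with z hz
    exact hform z hz
  have hgcont : ∀ z ∈ Om, ContinuousAt g z := fun z hz => (hdiffAt z hz).continuousAt
  -- norm of g is > 1 on Om
  have hgnorm : ∀ z ∈ Om, 1 < ‖g z‖ := by
    intro z hz
    have hpz : ‖g z‖ ^ n = ‖p.eval z‖ := by
      rw [← norm_pow, hpow z hz]
    by_contra hle
    push_neg at hle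
    have : ‖p.eval z‖ ≤ 1 := by
      rw [← hpz]
      exact pow_le_one₀ (norm_nonneg _) hle
    rw [hOm, mem_setOf_eq] at hz
    linarith
  -- the image is open
  set S : Set ℂ := g '' Om with hS
  have hSopen : IsOpen S := by
    rw [isOpen_iff_mem_nhds]
    rintro y ⟨z, hz, rfl⟩
    have hanal : AnalyticAt ℂ g z :=
      DifferentiableOn.analyticAt (fun w hw => (hdiffAt w hw).differentiableWithinAt)
        (hOopen.mem_nhds hz)
    rcases hanal.eventually_constant_or_nhds_le_map_nhds with hconst | hopen
    · exfalso
      obtain ⟨s, hs, hsconst⟩ := hconst.exists_mem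
      obtain ⟨r, hrpos, hrball⟩ := Metric.mem_nhds_iff.1 (inter_mem hs (hOopen.mem_nhds hz))
      have hpconst : ∀ w ∈ Metric.ball z r, p.eval w = g z ^ n := by
        intro w hw
        have hw' := hrball hw
        rw [← hpow w hw'.2, hsconst w hw'.1]
      have hroots : Metric.ball z r ⊆ {x | (p - Polynomial.C (g z ^ n)).IsRoot x} := by
        intro w hw
        simp only [mem_setOf_eq, Polynomial.IsRoot, Polynomial.eval_sub, Polynomial.eval_C]
        rw [hpconst w hw]
        ring
      have hq0 : p - Polynomial.C (g z ^ n) = 0 :=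
        Polynomial.eq_zero_of_infinite_isRoot _ ((ball_infinite z hrpos).mono hroots)
      have : p = Polynomial.C (g z ^ n) := by
        rw [sub_eq_zero] at hq0
        exact hq0
      rw [this, Polynomial.natDegree_C] at hdeg
      omega
    · apply hopen
      exact Filter.image_mem_map (hOopen.mem_nhds hz)
  have hSsub : S ⊆ {w : ℂ | 1 < ‖w‖} := by
    rintro y ⟨z, hz, rfl⟩
    exact hgnorm z hz
  -- S is relatively closed in E
  have hSclosed : ∀ y : ℂ, 1 < ‖y‖ → y ∈ closure S → y ∈ S := by
    intro y hy hycl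
    obtain ⟨x, hxS, hxlim⟩ := mem_closure_iff_seq_limit.1 hycl
    choose zs hzsOm hzsg using hxS
    -- eventual bound on p-values
    have hnormlim : Tendsto (fun k => ‖x k‖) atTop (𝓝 ‖y‖) := hxlim.norm
    have hev : ∀ᶠ k in atTop, ‖x k‖ ≤ ‖y‖ + 1 :=
      hnormlim.eventually (eventually_le_nhds (by linarith))
    obtain ⟨N, hN⟩ := eventually_atTop.1 hev
    set M : ℝ := (‖y‖ + 1) ^ n with hM
    -- a compact region containing the tail
    have hradM : ∃ R' : ℝ, ∀ z : ℂ, R' ≤ ‖z‖ → M < ‖p.eval z‖ := by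
      have hdpos : 0 < p.degree := Polynomial.natDegree_pos_iff_degree_pos.1 hdeg1
      have := (p.tendsto_norm_atTop hdpos (tendsto_norm_cocompact_atTop (E := ℂ))).eventually
        (eventually_gt_atTop M)
      obtain ⟨t, htc, hts⟩ := Filter.mem_cocompact.1 this
      obtain ⟨R₀, hR₀⟩ := htc.isBounded.subset_closedBall 0
      refine ⟨R₀ + 1, fun z hz => ?_⟩
      apply hts
      intro hzt
      have := hR₀ hzt
      simp only [Metric.mem_closedBall, Complex.dist_eq, sub_zero] at this
      linarith
    obtain ⟨R', hR'⟩ := hradM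
    set Q : Set ℂ := Metric.closedBall 0 R' ∩ {z | ‖p.eval z‖ ≤ M} with hQ
    have hQcomp : IsCompact Q :=
      (isCompact_closedBall 0 R').inter_right (isClosed_le (by fun_prop) continuous_const)
    have htail : ∀ k, zs (k + N) ∈ Q := by
      intro k
      have hk := hN (k + N) (by omega)
      have hpzs : ‖p.eval (zs (k + N))‖ ≤ M := by
        rw [← hpow _ (hzsOm (k + N)), norm_pow, hM]
        apply pow_le_pow_left₀ (norm_nonneg _)
        rw [hzsg]
        exact hk
      constructor
      · simp only [Metric.mem_closedBall, Complex.dist_eq, sub_zero]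
        by_contra hout
        push_neg at hout
        have := hR' (zs (k + N)) (by linarith)
        linarith
      · exact hpzs
    obtain ⟨a, haQ, φ, hφmono, hφlim⟩ := hQcomp.tendsto_subseq htail
    -- p(a) = y^n
    have hplim : Tendsto (fun j => p.eval (zs (φ j + N))) atTop (𝓝 (p.eval a)) :=
      (hpcont.continuousAt.tendsto).comp hφlim
    have hplim2 : Tendsto (fun j => p.eval (zs (φ j + N))) atTop (𝓝 (y ^ n)) := by
      have : (fun j => p.eval (zs (φ j + N))) = fun j => (x (φ j + N)) ^ n := by
        funext j
        rw [← hpow _ (hzsOm (φ j + N)), hzsg]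
      rw [this]
      have hsub : Tendsto (fun j => x (φ j + N)) atTop (𝓝 y) :=
        hxlim.comp (tendsto_atTop_mono (fun j => Nat.le_add_right (φ j) N)
          hφmono.tendsto_atTop)
      exact hsub.pow n
    have hpa : p.eval a = y ^ n := tendsto_nhds_unique hplim hplim2
    have haOm : a ∈ Om := by
      rw [hOm, mem_setOf_eq, hpa, norm_pow]
      exact one_lt_pow₀ hy (by omega)
    -- g a = y
    have hglim : Tendsto (fun j => g (zs (φ j + N))) atTop (𝓝 (g a)) :=
      ((hgcont a haOm).tendsto).comp hφlim
    have hglim2 : Tendsto (fun j => g (zs (φ j + N))) atTop (𝓝 y) := by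
      have : (fun j => g (zs (φ j + N))) = fun j => x (φ j + N) := by
        funext j
        rw [hzsg]
      rw [this]
      exact hxlim.comp (tendsto_atTop_mono (fun j => Nat.le_add_right (φ j) N)
        hφmono.tendsto_atTop)
    have : g a = y := tendsto_nhds_unique hglim hglim2
    exact ⟨a, haOm, this⟩
  -- S = E by connectedness of E
  have hSeq : S = {w : ℂ | 1 < ‖w‖} := by
    apply Set.eq_of_subset_of_subset hSsub
    by_contra hcon
    obtain ⟨y₀, hy₀E, hy₀S⟩ := not_subset.1 hcon
    have hEpre : IsPreconnected {w : ℂ | 1 < ‖w‖} := farPreconnected one_pos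
    have hVopen : IsOpen (closure S)ᶜ := isClosed_closure.isOpen_compl
    have hcover : {w : ℂ | 1 < ‖w‖} ⊆ S ∪ (closure S)ᶜ := by
      intro y hy
      by_cases h : y ∈ closure S
      · exact Or.inl (hSclosed y hy h)
      · exact Or.inr h
    have hne1 : ({w : ℂ | 1 < ‖w‖} ∩ S).Nonempty := ⟨g x₀, hSsub ⟨x₀, hx₀, rfl⟩, x₀, hx₀, rfl⟩
    have hne2 : ({w : ℂ | 1 < ‖w‖} ∩ (closure S)ᶜ).Nonempty := by
      refine ⟨y₀, hy₀E, fun h => hy₀S (hSclosed y₀ hy₀E h)⟩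
    obtain ⟨w, hwE, hwS, hwV⟩ := hEpre S (closure S)ᶜ hSopen hVopen hcover hne1 hne2
    exact hwV (subset_closure hwS)
  -- injectivity
  have hinj : Set.InjOn g Om := by
    intro z₁ hz₁ z₂ hz₂ heq
    set w := g z₁ with hwdef
    have hw1 : 1 < ‖w‖ := hgnorm z₁ hz₁
    have hw0 : w ≠ 0 := by
      intro h
      rw [h] at hw1
      simp at hw1
      linarith
    set ζ : ℂ := Complex.exp (2 * Real.pi * Complex.I / n) with hζdef
    have hζprim : IsPrimitiveRoot ζ n := Complex.isPrimitiveRoot_exp n (by omega)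
    have hζnorm : ‖ζ‖ = 1 := by
      rw [hζdef, Complex.norm_exp]
      have : (2 * (Real.pi:ℂ) * Complex.I / n).re = 0 := by
        rw [show (2 * (Real.pi:ℂ) * Complex.I / n) = (((2 * Real.pi / n : ℝ)) : ℂ) * Complex.I
          by push_cast; ring]
        simp
      rw [this, Real.exp_zero]
    set q : Polynomial ℂ := p - Polynomial.C (w ^ n) with hq
    have hqdeg : q.natDegree = n := by
      rw [hq, Polynomial.natDegree_sub_C, hdeg]
    have hq0 : q ≠ 0 := by
      intro h
      rw [h, Polynomial.natDegree_zero] at hqdeg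
      omega
    set F : Finset ℂ := q.roots.toFinset with hF
    have hFcard : F.card ≤ n := by
      calc F.card ≤ Multiset.card q.roots := q.roots.toFinset_card_le
        _ ≤ q.natDegree := q.card_roots'
        _ = n := hqdeg
    have hmemF : ∀ x : ℂ, x ∈ Om → g x ^ n = w ^ n → x ∈ F := by
      intro x hx hgx
      rw [hF, Multiset.mem_toFinset, Polynomial.mem_roots hq0]
      show q.eval x = 0
      rw [hq, Polynomial.eval_sub, Polynomial.eval_C, ← hgx, hpow x hx]
      ring
    -- for each k pick a preimage of ζ^k * w
    have hpick : ∀ k : Fin n, ∃ x, x ∈ Om ∧ g x = ζ ^ (k : ℕ) * w := by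
      intro k
      have : ζ ^ (k : ℕ) * w ∈ {w : ℂ | 1 < ‖w‖} := by
        rw [mem_setOf_eq, norm_mul, norm_pow, hζnorm, one_pow, one_mul]
        exact hw1
      rw [← hSeq] at this
      obtain ⟨x, hx, hgx⟩ := this
      exact ⟨x, hx, hgx⟩
    choose xs hxsOm hxsg using hpick
    have hxsF : ∀ k, xs k ∈ F := by
      intro k
      apply hmemF _ (hxsOm k)
      rw [hxsg k, mul_pow, ← pow_mul, mul_comm (k : ℕ) n, pow_mul, hζprim.pow_eq_one,
        one_pow, one_mul]
    have hxsinj : Function.Injective xs := by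
      intro k k' hkk'
      have : ζ ^ (k : ℕ) * w = ζ ^ (k' : ℕ) * w := by
        rw [← hxsg k, ← hxsg k', hkk']
      have hζeq : ζ ^ (k : ℕ) = ζ ^ (k' : ℕ) := mul_right_cancel₀ hw0 this
      exact Fin.ext (hζprim.pow_inj k.2 k'.2 hζeq)
    set X : Finset ℂ := Finset.univ.image xs with hX
    have hXcard : X.card = n := by
      rw [hX, Finset.card_image_of_injective _ hxsinj, Finset.card_univ, Fintype.card_fin]
    have hXF : X ⊆ F := by
      intro x hx
      obtain ⟨k, _, rfl⟩ := Finset.mem_image.1 hx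
      exact hxsF k
    have hFX : F = X := (Finset.eq_of_subset_of_card_le hXF (by omega)).symm
    -- z₁ and z₂ are both xs 0
    have hz₁F : z₁ ∈ F := hmemF z₁ hz₁ rfl
    have hz₂F : z₂ ∈ F := hmemF z₂ hz₂ (by rw [← heq])
    have hxs0 : ∀ x ∈ Om, x ∈ F → g x = w → x = xs ⟨0, by omega⟩ := by
      intro x hxO hxF hgx
      rw [hFX] at hxF
      obtain ⟨k, _, hk⟩ := Finset.mem_image.1 hxF
      have : ζ ^ (k : ℕ) * w = w := by rw [← hxsg k, hk, hgx]
      have hζk : ζ ^ (k : ℕ) = 1 := by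
        have := mul_right_cancel₀ hw0 (this.trans (one_mul w).symm)
        exact this
      have hk0 : (k : ℕ) = 0 := hζprim.pow_inj k.2 (by omega) (by rw [hζk, pow_zero])
      rw [← hk]
      congr 1
      exact Fin.ext hk0
    rw [hxs0 z₁ hz₁ hz₁F rfl, hxs0 z₂ hz₂ hz₂F heq.symm]
  -- conclusion
  refine ⟨g, ?_, ?_, ?_, ?_⟩
  · exact fun z hz => (hdiffAt z hz).differentiableWithinAt
  · exact hinj
  · rw [← hSeq, hS]
  · intro z hz
    exact hpow z hz
end

section
/- Let p(z) = ∏_{k=1}^{n} (z − ζ_k) be a complex polynomial of degree n ≥ 1 whose lemniscate Γ_{p,1} = {z : |p(z)| = 1} is proper (smooth and connected), so all ζ_k lie in Ω₋ = {z : |p(z)| < 1}. Let φ₋ : ℂ → ℂ be continuous on the closed unit disk, holomorphic on the open unit disk, injective on the closed unit disk, mapping the open unit disk onto Ω₋ and the unit circle onto Γ_{p,1}. Let φ₊ : ℂ → ℂ be continuous on {|z| ≥ 1}, holomorphic on {|z| > 1}, injective on {|z| ≥ 1}, mapping {|z| > 1} onto Ω₊ = {z : |p(z)| > 1} and the unit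 circle onto Γ_{p,1}, with φ₊(z)/z → λ for some λ > 0 as |z| → ∞. Let k : ℂ → ℂ satisfy |k(z)| = 1 and φ₊(k(z)) = φ₋(z) for all |z| = 1, and let a₁, …, a_n be the points of the open unit disk with φ₋(a_k) = ζ_k. Then there exists θ ∈ ℝ such that for all z with |z| = 1: k(z)^n = e^{iθ} · ∏_{k=1}^{n} (z − a_k)/(1 − conj(a_k)·z). -/
open Metric Complex Set Filter Function Polynomial in
section
open Metric Complex Set Filter Function Polynomial

lemma const_of_unimodular_boundary {f : ℂ → ℂ}
    (hd : DifferentiableOn ℂ f (ball (0:ℂ) 1))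
    (hc : ContinuousOn f (closedBall (0:ℂ) 1))
    (hb : ∀ z ∈ sphere (0:ℂ) 1, ‖f z‖ = 1)
    (h0 : ∀ z ∈ ball (0:ℂ) 1, f z ≠ 0) :
    ∀ z ∈ closedBall (0:ℂ) 1, f z = f 0 := by
  have hcl : closure (ball (0:ℂ) 1) = closedBall (0:ℂ) 1 := closure_ball 0 one_ne_zero
  have hfr : frontier (ball (0:ℂ) 1) = sphere (0:ℂ) 1 := frontier_ball 0 one_ne_zero
  have hdc : DiffContOnCl ℂ f (ball (0:ℂ) 1) := ⟨hd, by rwa [hcl]⟩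
  have hne : ∀ z ∈ closedBall (0:ℂ) 1, f z ≠ 0 := by
    intro z hz
    rcases eq_or_lt_of_le (mem_closedBall.mp hz) with h | h
    · have : z ∈ sphere (0:ℂ) 1 := by simpa [mem_sphere, dist_eq_norm] using h
      intro h0'
      have := hb z this
      rw [h0'] at this
      simp at this
    · exact h0 z (mem_ball.mpr h)
  have hle : ∀ z ∈ closedBall (0:ℂ) 1, ‖f z‖ ≤ 1 := by
    intro z hz
    have := Complex.norm_le_of_forall_mem_frontier_norm_le isBounded_ball hdc
      (C := 1) (fun w hw => by rw [hfr] at hw; simp [hb w hw]) (by rwa [hcl])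
    simpa using this
  have hge : ∀ z ∈ closedBall (0:ℂ) 1, 1 ≤ ‖f z‖ := by
    intro z hz
    have hdinv : DiffContOnCl ℂ (fun w => (f w)⁻¹) (ball (0:ℂ) 1) := by
      refine ⟨hd.inv h0, ?_⟩
      rw [hcl]
      exact hc.inv₀ hne
    have := Complex.norm_le_of_forall_mem_frontier_norm_le isBounded_ball hdinv
      (C := 1) (fun w hw => by
        rw [hfr] at hw
        simp [map_inv₀, hb w hw]) (by rwa [hcl])
    simp only [norm_inv] at this
    have hfz := (norm_pos_iff.mpr (hne z hz))
    rw [inv_le_one_iff₀] at this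
    rcases this with h | h
    · exact absurd h (not_le.mpr hfz)
    · exact h
  have habs : ∀ z ∈ closedBall (0:ℂ) 1, ‖f z‖ = 1 := fun z hz =>
    le_antisymm (hle z hz) (hge z hz)
  have hmax : IsMaxOn (norm ∘ f) (ball (0:ℂ) 1) 0 := by
    intro z hz
    simp only [Function.comp, mem_setOf_eq]
    rw [habs z (ball_subset_closedBall hz), habs 0 (ball_subset_closedBall (mem_ball_self one_pos))]
  have := Complex.eqOn_closure_of_isPreconnected_of_isMaxOn_norm
    (convex_ball (0:ℂ) 1).isPreconnected isOpen_ball hdc (mem_ball_self one_pos) hmax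
  intro z hz
  exact this (by rwa [hcl])


lemma deriv_ne_zero_of_injOn {f : ℂ → ℂ}
    (hd : DifferentiableOn ℂ f (ball (0:ℂ) 1))
    (hinj : Set.InjOn f (ball (0:ℂ) 1))
    {c : ℂ} (hc : c ∈ ball (0:ℂ) 1) : deriv f c ≠ 0 := by
  intro h0
  have hball : ball (0:ℂ) 1 ∈ nhds c := isOpen_ball.mem_nhds hc
  have hfa : AnalyticAt ℂ f c := hd.analyticAt hball
  set F : ℂ → ℂ := fun z => f z - f c with hF
  have hFc : F c = 0 := by simp [hF]
  have hFa : AnalyticAt ℂ F c := hfa.sub analyticAt_const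
  -- order is not ⊤
  have hord_ne_top : analyticOrderAt F c ≠ ⊤ := by
    intro htop
    have hev : ∀ᶠ z in nhds c, F z = 0 := analyticOrderAt_eq_top.mp htop
    obtain ⟨ε, hε, hsub⟩ := Metric.mem_nhds_iff.mp (Filter.inter_mem hev hball)
    have h2 : c + ε/2 ∈ ball c ε := by
      simp only [mem_ball, dist_eq_norm, add_sub_cancel_left]
      rw [show ((ε:ℂ)/2) = ((ε/2 : ℝ):ℂ) by push_cast; ring, Complex.norm_real,
        Real.norm_eq_abs, abs_of_pos (half_pos hε)]
      linarith
    obtain ⟨hF2, hball2⟩ := hsub h2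
    have : f (c + ε/2) = f c := by simpa [hF, sub_eq_zero] using hF2
    have := hinj hball2 hc this
    have h4 : ((ε/2 : ℝ) : ℂ) = 0 := by push_cast; linear_combination this
    rw [Complex.ofReal_eq_zero] at h4
    linarith
  obtain ⟨m, hm⟩ := WithTop.ne_top_iff_exists.mp hord_ne_top
  -- factorization
  obtain ⟨g, hg, hgc, hfac⟩ := (hFa.analyticOrderAt_eq_natCast (n := m)).mp hm.symm
  -- m ≠ 0
  have hm0 : m ≠ 0 := by
    intro h
    subst h
    have := hfac.self_of_nhds
    simp [hFc] at this
    exact hgc this.symm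
  -- m ≠ 1
  have hm1 : m ≠ 1 := by
    intro h
    subst h
    have hder : HasDerivAt (fun z => (z - c) * g z) (g c) c := by
      have h1 : HasDerivAt (fun z : ℂ => z - c) 1 c := (hasDerivAt_id c).sub_const c
      have h2 : HasDerivAt g (deriv g c) c := hg.differentiableAt.hasDerivAt
      exact (h1.mul h2).congr_deriv (by simp)
    have hDF : deriv F c = g c := by
      have heq : F =ᶠ[nhds c] fun z => (z - c) * g z := by
        filter_upwards [hfac] with z hz
        simpa using hz
      rw [heq.deriv_eq, hder.deriv]
    have hDF2 : deriv F c = deriv f c := deriv_sub_const (f c)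
    rw [hDF2, h0] at hDF
    exact hgc hDF.symm
  have hm2 : 2 ≤ m := by omega
  have hmC : (m:ℂ) ≠ 0 := Nat.cast_ne_zero.mpr hm0
  -- m-th root of g near c
  set r : ℂ := Complex.exp (Complex.log (g c) / m) with hr
  have hrm : r ^ m = g c := by
    rw [hr, ← Complex.exp_nat_mul, mul_div_cancel₀ _ hmC]
    exact Complex.exp_log hgc
  have hrne : r ≠ 0 := Complex.exp_ne_zero _
  set ψ : ℂ → ℂ := fun z => r * Complex.exp ((m:ℂ)⁻¹ * Complex.log (g z / g c)) with hψ
  have hψa : AnalyticAt ℂ ψ c := by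
    refine analyticAt_const.mul (AnalyticAt.cexp ?_)
    refine analyticAt_const.mul ?_
    refine AnalyticAt.clog (hg.div analyticAt_const hgc) ?_
    simp [div_self hgc, Complex.slitPlane]
  have hψc : ψ c = r := by simp [hψ, div_self hgc]
  have hgne : ∀ᶠ z in nhds c, g z ≠ 0 := hg.continuousAt.eventually_ne hgc
  have hψm : ∀ᶠ z in nhds c, ψ z ^ m = g z := by
    filter_upwards [hgne] with z hz
    rw [hψ]
    simp only
    rw [mul_pow, hrm, ← Complex.exp_nat_mul, ← mul_assoc, mul_inv_cancel₀ hmC, one_mul,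
      Complex.exp_log (div_ne_zero hz hgc)]
    field_simp
  -- w := (z - c) * ψ z
  set w : ℂ → ℂ := fun z => (z - c) * ψ z with hw
  have hwa : AnalyticAt ℂ w c := (analyticAt_id.sub analyticAt_const).mul hψa
  have hwc : w c = 0 := by simp [hw]
  have hwd : HasDerivAt w r c := by
    have h1 : HasDerivAt (fun z : ℂ => z - c) 1 c := (hasDerivAt_id c).sub_const c
    have h2 : HasDerivAt ψ (deriv ψ c) c := hψa.differentiableAt.hasDerivAt
    exact (h1.mul h2).congr_deriv (by simp [hψc])
  have hws : HasStrictDerivAt w r c := by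
    obtain ⟨p, hp⟩ := hwa
    have hs := hp.hasStrictDerivAt
    have hu : (p 1 fun _ => 1) = r := hp.hasDerivAt.unique hwd
    rwa [hu] at hs
  -- eventually F = w ^ m
  have hFw : ∀ᶠ z in nhds c, F z = w z ^ m := by
    filter_upwards [hfac, hψm] with z h1 h2
    rw [h1, hw]
    simp only
    rw [mul_pow, h2, smul_eq_mul]
  -- local inverse
  set G := (hws.hasStrictFDerivAt_equiv hrne).localInverse _ _ _ with hG
  have hGt : Tendsto G (nhds (0:ℂ)) (nhds c) := by
    have := (hws.hasStrictFDerivAt_equiv hrne).localInverse_tendsto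
    rwa [show w c = 0 from hwc] at this
  have hGr : ∀ᶠ y in nhds (0:ℂ), w (G y) = y := by
    have := (hws.hasStrictFDerivAt_equiv hrne).eventually_right_inverse
    rwa [show w c = 0 from hwc] at this
  -- the good set near c
  have hU : ∀ᶠ z in nhds c, z ∈ ball (0:ℂ) 1 ∧ F z = w z ^ m :=
    (Filter.eventually_mem_set.mpr hball).and hFw
  have hQ : ∀ᶠ y in nhds (0:ℂ),
      w (G y) = y ∧ G y ∈ ball (0:ℂ) 1 ∧ F (G y) = w (G y) ^ m :=
    hGr.and (hGt.eventually hU)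
  -- ω = exp(2πI/m)
  set ω : ℂ := Complex.exp (2 * Real.pi * Complex.I / m) with hω
  have hωm : ω ^ m = 1 := by
    rw [hω, ← Complex.exp_nat_mul, mul_div_cancel₀ _ hmC]
    exact Complex.exp_two_pi_mul_I
  have hω1 : ω ≠ 1 := by
    rw [hω]
    intro h
    obtain ⟨j, hj⟩ := Complex.exp_eq_one_iff.mp h
    rw [div_eq_iff hmC] at hj
    have h2 : (2 * (Real.pi:ℂ) * Complex.I) ≠ 0 := by
      simp [Complex.I_ne_zero, Real.pi_ne_zero]
    have h3 : (1:ℂ) * (2 * (Real.pi:ℂ) * Complex.I)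
        = ((j:ℂ) * m) * (2 * (Real.pi:ℂ) * Complex.I) := by
      linear_combination hj
    have h4 : (1:ℂ) = (j:ℂ) * m := mul_right_cancel₀ h2 h3
    have h5 : (1:ℤ) = j * m := by exact_mod_cast h4
    have h6 : (m:ℤ) ∣ 1 := ⟨j, by rw [h5]; ring⟩
    have := Int.le_of_dvd one_pos h6
    omega
  -- both y and ω y satisfy the property, for y ≠ 0 small
  have hQω : ∀ᶠ y in nhds (0:ℂ),
      (w (G y) = y ∧ G y ∈ ball (0:ℂ) 1 ∧ F (G y) = w (G y) ^ m) ∧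
      (w (G (ω * y)) = ω * y ∧ G (ω * y) ∈ ball (0:ℂ) 1 ∧ F (G (ω * y)) = w (G (ω * y)) ^ m) := by
    refine hQ.and ?_
    have hcont : Tendsto (fun y : ℂ => ω * y) (nhds 0) (nhds 0) := by
      have : Continuous (fun y : ℂ => ω * y) := continuous_const.mul continuous_id
      simpa using this.tendsto (0:ℂ)
    exact hcont.eventually hQ
  have hQω' := hQω.filter_mono (nhdsWithin_le_nhds (s := {(0:ℂ)}ᶜ))
  obtain ⟨y, ⟨⟨e1, e2, e3⟩, ⟨e1', e2', e3'⟩⟩, hy0⟩ :=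
    (hQω'.and eventually_mem_nhdsWithin).exists
  have hy0' : y ≠ 0 := hy0
  -- equal values
  have hv1 : F (G y) = y ^ m := by rw [e3, e1]
  have hv2 : F (G (ω * y)) = y ^ m := by rw [e3', e1', mul_pow, hωm, one_mul]
  have hfeq : f (G y) = f (G (ω * y)) := by
    have : F (G y) = F (G (ω * y)) := by rw [hv1, hv2]
    simpa [hF, sub_left_inj] using this
  have hGeq : G y = G (ω * y) := hinj e2 e2' hfeq
  have : y = ω * y := by conv_lhs => rw [← e1, hGeq, e1']
  have : (ω - 1) * y = 0 := by linear_combination -this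
  rcases mul_eq_zero.mp this with h | h
  · exact hω1 (by linear_combination h)
  · exact hy0' h


lemma partA (n : ℕ) (hn : 1 ≤ n) (ζ : Fin n → ℂ) (p : Polynomial ℂ)
    (hp : p = ∏ i : Fin n, (X - C (ζ i)))
    (φp : ℂ → ℂ)
    (hφpcont : ContinuousOn φp {z : ℂ | 1 ≤ ‖z‖})
    (hφpdiff : DifferentiableOn ℂ φp {z : ℂ | 1 < ‖z‖})
    (hφpim : φp '' {z : ℂ | 1 < ‖z‖} = {z : ℂ | 1 < ‖p.eval z‖})
    (hφpbdry : φp '' Metric.sphere (0 : ℂ) 1 = {z : ℂ | ‖p.eval z‖ = 1})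
    (l : ℝ) (hl : 0 < l)
    (hφpnorm : Filter.Tendsto (fun z : ℂ => φp z / z)
      (Filter.comap (‖·‖) Filter.atTop) (nhds (l : ℂ))) :
    ∀ w : ℂ, ‖w‖ = 1 → p.eval (φp w) = w ^ n := by
  set g : ℂ → ℂ := fun z => if z = 0 then ((l:ℂ))^n else p.eval (φp z⁻¹) * z^n with hg
  -- algebraic formula
  have hform : ∀ z : ℂ, z ≠ 0 → g z = ∏ i : Fin n, (φp z⁻¹ * z - ζ i * z) := by
    intro z hz
    rw [hg]
    simp only [if_neg hz]
    rw [hp, eval_prod]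
    simp only [eval_sub, eval_X, eval_C]
    rw [show (z:ℂ)^n = ∏ _i : Fin n, z by
      rw [Finset.prod_const, Finset.card_univ, Fintype.card_fin]]
    rw [← Finset.prod_mul_distrib]
    congr 1
    funext i
    ring
  -- inversion tendsto
  have habs : Tendsto (fun z : ℂ => ‖z‖) (nhdsWithin 0 {(0:ℂ)}ᶜ)
      (nhdsWithin (0:ℝ) (Set.Ioi 0)) := by
    rw [tendsto_nhdsWithin_iff]
    constructor
    · have := (continuous_norm.tendsto (0:ℂ)).mono_left
        (nhdsWithin_le_nhds (s := {(0:ℂ)}ᶜ))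
      simpa using this
    · filter_upwards [eventually_mem_nhdsWithin] with z hz
      exact mem_Ioi.mpr (norm_pos_iff.mpr hz)
  have h1 : Tendsto (fun z : ℂ => z⁻¹) (nhdsWithin 0 {(0:ℂ)}ᶜ)
      (Filter.comap (‖·‖) Filter.atTop) := by
    rw [Filter.tendsto_comap_iff]
    have : ((‖·‖) ∘ fun z : ℂ => z⁻¹) = fun z : ℂ => ‖z‖⁻¹ := by
      funext z; simp [map_inv₀]
    rw [this]
    exact tendsto_inv_nhdsGT_zero.comp habs
  have hφ : Tendsto (fun z : ℂ => φp z⁻¹ * z) (nhdsWithin 0 {(0:ℂ)}ᶜ) (nhds (l:ℂ)) := by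
    have h2 := hφpnorm.comp h1
    refine h2.congr' ?_
    filter_upwards [eventually_mem_nhdsWithin] with z hz
    simp only [Function.comp]
    rw [div_eq_mul_inv, inv_inv]
  have hg0 : Tendsto g (nhdsWithin 0 {(0:ℂ)}ᶜ) (nhds (((l:ℂ))^n)) := by
    have hprod : Tendsto (fun z : ℂ => ∏ i : Fin n, (φp z⁻¹ * z - ζ i * z))
        (nhdsWithin 0 {(0:ℂ)}ᶜ) (nhds (∏ _i : Fin n, (l:ℂ))) := by
      apply tendsto_finset_prod
      intro i _
      have hz : Tendsto (fun z : ℂ => ζ i * z) (nhdsWithin 0 {(0:ℂ)}ᶜ) (nhds 0) := by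
        have : Continuous (fun z : ℂ => ζ i * z) := continuous_const.mul continuous_id
        have := (this.tendsto 0).mono_left (nhdsWithin_le_nhds (s := {(0:ℂ)}ᶜ))
        simpa using this
      have := hφ.sub hz
      simpa using this
    rw [Finset.prod_const, Finset.card_univ, Fintype.card_fin] at hprod
    refine hprod.congr' ?_
    filter_upwards [eventually_mem_nhdsWithin] with z hz
    exact (hform z hz).symm
  have hcont0 : ContinuousAt g 0 := by
    rw [← continuousWithinAt_compl_self]
    unfold ContinuousWithinAt
    rw [show g 0 = ((l:ℂ))^n by simp [hg]]
    exact hg0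
  -- differentiability on ball
  have hmem : ∀ z : ℂ, z ∈ ball (0:ℂ) 1 \ {0} → 1 < ‖z⁻¹‖ := by
    intro z hz
    rw [norm_inv]
    have h01 : 0 < ‖z‖ := norm_pos_iff.mpr hz.2
    have : ‖z‖ < 1 := by simpa [mem_ball, dist_eq_norm] using hz.1
    exact (one_lt_inv₀ h01).mpr this
  have hdiff : DifferentiableOn ℂ g (ball (0:ℂ) 1) := by
    rw [← differentiableOn_compl_singleton_and_continuousAt_iff
      (isOpen_ball.mem_nhds (mem_ball_self one_pos))]
    refine ⟨?_, hcont0⟩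
    have hinv : DifferentiableOn ℂ (fun z : ℂ => z⁻¹) (ball (0:ℂ) 1 \ {0}) := by
      apply DifferentiableOn.inv differentiableOn_id
      intro z hz; exact hz.2
    have hcomp : DifferentiableOn ℂ (fun z : ℂ => φp z⁻¹) (ball (0:ℂ) 1 \ {0}) :=
      hφpdiff.comp hinv (fun z hz => hmem z hz)
    have : DifferentiableOn ℂ (fun z : ℂ => p.eval (φp z⁻¹) * z^n) (ball (0:ℂ) 1 \ {0}) :=
      ((p.differentiable.comp_differentiableOn hcomp).mul
        (differentiable_pow n).differentiableOn)
    refine this.congr ?_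
    intro z hz
    have hz0 : z ≠ 0 := by simpa using hz.2
    rw [hg]; simp only [if_neg hz0]
  -- continuity on closed ball
  have hmem' : ∀ z : ℂ, z ∈ closedBall (0:ℂ) 1 \ {0} → 1 ≤ ‖z⁻¹‖ := by
    intro z hz
    rw [norm_inv]
    have h01 : 0 < ‖z‖ := norm_pos_iff.mpr hz.2
    have : ‖z‖ ≤ 1 := by simpa [mem_closedBall, dist_eq_norm] using hz.1
    exact (one_le_inv₀ h01).mpr this
  have hcontOn' : ContinuousOn g (closedBall (0:ℂ) 1 \ {0}) := by
    have hinv : ContinuousOn (fun z : ℂ => z⁻¹) (closedBall (0:ℂ) 1 \ {0}) :=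
      continuousOn_inv₀.mono (fun z hz => hz.2)
    have hcomp : ContinuousOn (fun z : ℂ => φp z⁻¹) (closedBall (0:ℂ) 1 \ {0}) :=
      hφpcont.comp hinv (fun z hz => hmem' z hz)
    have : ContinuousOn (fun z : ℂ => p.eval (φp z⁻¹) * z^n) (closedBall (0:ℂ) 1 \ {0}) :=
      (p.continuous.comp_continuousOn hcomp).mul (continuous_pow n).continuousOn
    refine this.congr ?_
    intro z hz
    have hz0 : z ≠ 0 := by simpa using hz.2
    rw [hg]; simp only [if_neg hz0]
  have hcontOn : ContinuousOn g (closedBall (0:ℂ) 1) := by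
    intro z hz
    rcases eq_or_ne z 0 with rfl | hz0
    · exact hcont0.continuousWithinAt
    · have hmemn : closedBall (0:ℂ) 1 \ {0} ∈ nhdsWithin z (closedBall (0:ℂ) 1) := by
        rw [diff_eq]
        exact Filter.inter_mem self_mem_nhdsWithin
          (mem_nhdsWithin_of_mem_nhds (isOpen_compl_singleton.mem_nhds hz0))
      exact (hcontOn' z ⟨hz, hz0⟩).mono_of_mem_nhdsWithin hmemn
  -- boundary values
  have hbdry : ∀ z ∈ sphere (0:ℂ) 1, ‖g z‖ = 1 := by
    intro z hz
    have habs1 : ‖z‖ = 1 := by simpa [mem_sphere, dist_eq_norm] using hz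
    have hz0 : z ≠ 0 := by intro h; rw [h] at habs1; simp at habs1
    have hinv : z⁻¹ ∈ sphere (0:ℂ) 1 := by
      simp [mem_sphere, dist_eq_norm, norm_inv, habs1]
    have : φp z⁻¹ ∈ {w : ℂ | ‖p.eval w‖ = 1} := by
      rw [← hφpbdry]; exact mem_image_of_mem _ hinv
    have h2 : ‖Polynomial.eval (φp z⁻¹) p‖ = 1 := this
    rw [hg]
    simp only [if_neg hz0, norm_mul, norm_pow]
    rw [h2, habs1, one_pow, mul_one]
  -- nonvanishing
  have hne : ∀ z ∈ ball (0:ℂ) 1, g z ≠ 0 := by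
    intro z hz
    rcases eq_or_ne z 0 with rfl | hz0
    · rw [hg]; simp only [if_pos rfl]
      exact pow_ne_zero _ (by exact_mod_cast ne_of_gt hl)
    · have : φp z⁻¹ ∈ {w : ℂ | 1 < ‖p.eval w‖} := by
        rw [← hφpim]
        exact mem_image_of_mem _ (hmem z ⟨hz, hz0⟩)
      have h2 : 1 < ‖Polynomial.eval (φp z⁻¹) p‖ := this
      have hne1 : p.eval (φp z⁻¹) ≠ 0 := by
        intro h; rw [h] at h2; simp at h2; linarith
      rw [hg]; simp only [if_neg hz0]
      exact mul_ne_zero hne1 (pow_ne_zero _ hz0)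
  -- constancy
  have hconst := const_of_unimodular_boundary hdiff hcontOn hbdry hne
  have hg0val : g 0 = ((l:ℂ))^n := by rw [hg]; simp
  -- evaluate at 1 : l^n = 1
  have h1mem : (1:ℂ) ∈ closedBall (0:ℂ) 1 := by simp
  have h1s : (1:ℂ) ∈ sphere (0:ℂ) 1 := by simp
  have habs1 : ‖((l:ℂ))^n‖ = 1 := by
    rw [← hg0val, ← hconst 1 h1mem]
    exact hbdry 1 h1s
  have hln : ((l:ℂ))^n = 1 := by
    have : ‖(l:ℂ)^n‖ = l^n := by
      rw [norm_pow, Complex.norm_real, Real.norm_eq_abs, abs_of_pos hl]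
    rw [this] at habs1
    exact_mod_cast congrArg (fun x : ℝ => (x:ℂ)) habs1
  -- conclusion
  intro w hw
  have hw0 : w ≠ 0 := by intro h; rw [h] at hw; simp at hw
  have hwinv : w⁻¹ ∈ closedBall (0:ℂ) 1 := by
    simp [mem_closedBall, dist_eq_norm, norm_inv, hw]
  have hcw := hconst w⁻¹ hwinv
  rw [hg0val, hln, hg] at hcw
  simp only [if_neg (inv_ne_zero hw0), inv_inv, inv_pow] at hcw
  -- hcw : p.eval (φp w) * (w^n)⁻¹ = 1
  have hwn : w ^ n ≠ 0 := pow_ne_zero _ hw0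
  field_simp at hcw
  exact hcw


-- Blaschke boundary identity
lemma blaschke_abs {a z : ℂ} (hz : ‖z‖ = 1) :
    ‖1 - (starRingEnd ℂ) a * z‖ = ‖z - a‖ := by
  have hzz : (starRingEnd ℂ) z * z = 1 := by
    have h1 : z * (starRingEnd ℂ) z = ((Complex.normSq z : ℝ) : ℂ) := Complex.mul_conj z
    have h2 : Complex.normSq z = 1 := by
      rw [Complex.normSq_eq_norm_sq, hz]; norm_num
    rw [h2] at h1
    rw [mul_comm] at h1
    simpa using h1
  calc ‖1 - (starRingEnd ℂ) a * z‖
      = ‖(starRingEnd ℂ) (1 - (starRingEnd ℂ) a * z)‖ := (Complex.norm_conj _).symm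
    _ = ‖1 - a * (starRingEnd ℂ) z‖ := by
        congr 1
        simp [map_sub, map_mul, Complex.conj_conj]
    _ = ‖1 - a * (starRingEnd ℂ) z‖ * ‖z‖ := by rw [hz, mul_one]
    _ = ‖(1 - a * (starRingEnd ℂ) z) * z‖ := (norm_mul _ _).symm
    _ = ‖z - a‖ := by
        congr 1
        linear_combination -a * hzz

lemma partB (n : ℕ) (ζ : Fin n → ℂ) (p : Polynomial ℂ)
    (hp : p = ∏ i : Fin n, (X - C (ζ i)))
    (φm : ℂ → ℂ)
    (hφmcont : ContinuousOn φm (Metric.closedBall (0 : ℂ) 1))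
    (hφmdiff : DifferentiableOn ℂ φm (Metric.ball (0 : ℂ) 1))
    (hφminj : Set.InjOn φm (Metric.closedBall (0 : ℂ) 1))
    (hφmbdry : φm '' Metric.sphere (0 : ℂ) 1 = {z : ℂ | ‖p.eval z‖ = 1})
    (a : Fin n → ℂ) (ha : ∀ i, a i ∈ Metric.ball (0 : ℂ) 1)
    (hφa : ∀ i, φm (a i) = ζ i) :
    ∃ c : ℂ, ‖c‖ = 1 ∧ ∀ z ∈ sphere (0:ℂ) 1,
      p.eval (φm z) = c * ∏ i : Fin n, (z - a i) / (1 - (starRingEnd ℂ) (a i) * z) := by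
  set d : Fin n → ℂ → ℂ := fun i => dslope φm (a i) with hd
  set h : ℂ → ℂ := fun z => ∏ i : Fin n, (d i z * (1 - (starRingEnd ℂ) (a i) * z)) with hh
  have habsa : ∀ i, ‖a i‖ < 1 := by
    intro i
    simpa [mem_ball, dist_eq_norm] using ha i
  have hdenom : ∀ i, ∀ z ∈ closedBall (0:ℂ) 1, 1 - (starRingEnd ℂ) (a i) * z ≠ 0 := by
    intro i z hz heq
    have hz1 : ‖z‖ ≤ 1 := by simpa [mem_closedBall, dist_eq_norm] using hz
    have : (1:ℂ) = (starRingEnd ℂ) (a i) * z := by linear_combination heq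
    have habs : (1:ℝ) = ‖(starRingEnd ℂ) (a i) * z‖ := by
      rw [← this]; simp
    rw [norm_mul, Complex.norm_conj] at habs
    nlinarith [habsa i, norm_nonneg z, norm_nonneg (a i)]
  -- d i differentiable / continuous / nonvanishing
  have hdd : ∀ i, DifferentiableOn ℂ (d i) (ball (0:ℂ) 1) := fun i =>
    (Complex.differentiableOn_dslope (isOpen_ball.mem_nhds (ha i))).mpr hφmdiff
  have hnb : ∀ i, closedBall (0:ℂ) 1 ∈ nhds (a i) := fun i =>
    mem_nhds_iff.mpr ⟨ball (0:ℂ) 1, ball_subset_closedBall, isOpen_ball, ha i⟩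
  have hdc : ∀ i, ContinuousOn (d i) (closedBall (0:ℂ) 1) := fun i =>
    (continuousOn_dslope (hnb i)).mpr
      ⟨hφmcont, hφmdiff.differentiableAt (isOpen_ball.mem_nhds (ha i))⟩
  have hdne : ∀ i, ∀ z ∈ ball (0:ℂ) 1, d i z ≠ 0 := by
    intro i z hz
    rcases eq_or_ne z (a i) with rfl | hne
    · rw [hd]
      simp only [dslope_same]
      exact deriv_ne_zero_of_injOn hφmdiff (hφminj.mono ball_subset_closedBall) hz
    · rw [hd]
      simp only
      rw [dslope_of_ne _ hne, slope_def_field]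
      apply div_ne_zero
      · rw [hφa i, ← hφa i]
        intro heq
        rw [sub_eq_zero] at heq
        exact hne (hφminj (ball_subset_closedBall hz) (ball_subset_closedBall (ha i)) heq)
      · exact sub_ne_zero.mpr hne
  -- h differentiable, continuous, nonvanishing, unimodular on boundary
  have hhd : DifferentiableOn ℂ h (ball (0:ℂ) 1) := by
    apply DifferentiableOn.fun_finset_prod
    intro i _
    exact (hdd i).mul ((differentiable_const (1:ℂ)).differentiableOn.sub
      ((differentiable_const _).mul differentiable_id).differentiableOn)
  have hhc : ContinuousOn h (closedBall (0:ℂ) 1) := by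
    apply continuousOn_finset_prod
    intro i _
    exact (hdc i).mul ((continuous_const.sub (continuous_const.mul continuous_id)).continuousOn)
  have hh0 : ∀ z ∈ ball (0:ℂ) 1, h z ≠ 0 := by
    intro z hz
    rw [hh]
    simp only
    rw [Finset.prod_ne_zero_iff]
    intro i _
    exact mul_ne_zero (hdne i z hz) (hdenom i z (ball_subset_closedBall hz))
  have hhb : ∀ z ∈ sphere (0:ℂ) 1, ‖h z‖ = 1 := by
    intro z hz
    have hz1 : ‖z‖ = 1 := by simpa [mem_sphere, dist_eq_norm] using hz
    have hza : ∀ i, z ≠ a i := by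
      intro i heq
      rw [heq] at hz1
      exact absurd hz1 (ne_of_lt (habsa i))
    have hfac : ∀ i, ‖d i z * (1 - (starRingEnd ℂ) (a i) * z)‖
        = ‖φm z - ζ i‖ := by
      intro i
      rw [hd]
      simp only
      rw [dslope_of_ne _ (hza i), slope_def_field, norm_mul, blaschke_abs hz1, norm_div, hφa i]
      have hne0 : ‖z - a i‖ ≠ 0 := by
        simpa [sub_eq_zero] using hza i
      field_simp
    rw [hh]
    simp only [norm_prod]
    rw [Finset.prod_congr rfl (fun i _ => hfac i)]
    have : ∏ i : Fin n, ‖φm z - ζ i‖ = ‖p.eval (φm z)‖ := by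
      rw [hp, eval_prod, norm_prod]
      simp
    rw [this]
    have : φm z ∈ {w : ℂ | ‖p.eval w‖ = 1} := by
      rw [← hφmbdry]; exact mem_image_of_mem _ hz
    exact this
  -- constancy
  have hconst := const_of_unimodular_boundary hhd hhc hhb hh0
  refine ⟨h 0, ?_, ?_⟩
  · have h1s : (1:ℂ) ∈ sphere (0:ℂ) 1 := by simp
    have h1c : (1:ℂ) ∈ closedBall (0:ℂ) 1 := by simp
    rw [← hconst 1 h1c]
    exact hhb 1 h1s
  · intro z hz
    have hzc : z ∈ closedBall (0:ℂ) 1 := sphere_subset_closedBall hz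
    have key : ∀ i : Fin n, φm z - ζ i = (z - a i) * d i z := by
      intro i
      have h2 := sub_smul_dslope φm (a i) z
      rw [smul_eq_mul, hφa i] at h2
      simp only [hd]
      exact h2.symm
    rw [hp, eval_prod]
    simp only [eval_sub, eval_X, eval_C]
    rw [Finset.prod_congr rfl (fun i _ => key i)]
    rw [← hconst z hzc, hh]
    simp only
    rw [← Finset.prod_mul_distrib]
    congr 1
    funext i
    rw [div_eq_mul_inv]
    linear_combination -(z - a i) * d i z * mul_inv_cancel₀ (hdenom i z hzc)

end


open Polynomial in
/-- Ebenfelt–Khavinson–Shapiro: the fingerprint `k = φ₊⁻¹ ∘ φ₋` of a proper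
polynomial lemniscate `Γ_{p,1}` of degree `n`, `p = ∏ (z − ζₖ)`, satisfies
`k(z)ⁿ = e^{iθ} ∏ₖ (z − aₖ)/(1 − conj(aₖ) z)` on the unit circle, where
`aₖ = φ₋⁻¹(ζₖ)`. -/
theorem fingerprint_of_proper_lemniscate
    (n : ℕ) (hn : 1 ≤ n) (ζ : Fin n → ℂ) (p : Polynomial ℂ)
    (hp : p = ∏ i : Fin n, (X - C (ζ i)))
    (hsmooth : ∀ z : ℂ, ‖p.eval z‖ = 1 → p.derivative.eval z ≠ 0)
    (hconn : IsConnected {z : ℂ | ‖p.eval z‖ = 1})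
    (φm : ℂ → ℂ)
    (hφmcont : ContinuousOn φm (Metric.closedBall (0 : ℂ) 1))
    (hφmdiff : DifferentiableOn ℂ φm (Metric.ball (0 : ℂ) 1))
    (hφminj : Set.InjOn φm (Metric.closedBall (0 : ℂ) 1))
    (hφmim : φm '' Metric.ball (0 : ℂ) 1 = {z : ℂ | ‖p.eval z‖ < 1})
    (hφmbdry : φm '' Metric.sphere (0 : ℂ) 1 = {z : ℂ | ‖p.eval z‖ = 1})
    (φp : ℂ → ℂ)
    (hφpcont : ContinuousOn φp {z : ℂ | 1 ≤ ‖z‖})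
    (hφpdiff : DifferentiableOn ℂ φp {z : ℂ | 1 < ‖z‖})
    (hφpinj : Set.InjOn φp {z : ℂ | 1 ≤ ‖z‖})
    (hφpim : φp '' {z : ℂ | 1 < ‖z‖} = {z : ℂ | 1 < ‖p.eval z‖})
    (hφpbdry : φp '' Metric.sphere (0 : ℂ) 1 = {z : ℂ | ‖p.eval z‖ = 1})
    (l : ℝ) (hl : 0 < l)
    (hφpnorm : Filter.Tendsto (fun z : ℂ => φp z / z)
      (Filter.comap (‖·‖) Filter.atTop) (nhds (l : ℂ)))
    (k : ℂ → ℂ)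
    (hk : ∀ z : ℂ, ‖z‖ = 1 → ‖k z‖ = 1 ∧ φp (k z) = φm z)
    (a : Fin n → ℂ) (ha : ∀ i, a i ∈ Metric.ball (0 : ℂ) 1)
    (hφa : ∀ i, φm (a i) = ζ i) :
    ∃ θ : ℝ, ∀ z : ℂ, ‖z‖ = 1 →
      (k z) ^ n = Complex.exp (θ * Complex.I) *
        ∏ i : Fin n, (z - a i) / (1 - (starRingEnd ℂ) (a i) * z) := by
  obtain ⟨c, hc1, hcB⟩ := partB n ζ p hp φm hφmcont hφmdiff hφminj hφmbdry a ha hφa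
  have hA := partA n hn ζ p hp φp hφpcont hφpdiff hφpim hφpbdry l hl hφpnorm
  refine ⟨Complex.arg c, ?_⟩
  intro z hz
  obtain ⟨hk1, hk2⟩ := hk z hz
  have hzs : z ∈ Metric.sphere (0:ℂ) 1 := by
    simpa [Metric.mem_sphere, dist_eq_norm] using hz
  have hec : Complex.exp ((Complex.arg c : ℂ) * Complex.I) = c := by
    have h3 := Complex.norm_mul_exp_arg_mul_I c
    rw [hc1] at h3
    simpa using h3
  calc (k z) ^ n = p.eval (φp (k z)) := (hA (k z) hk1).symm
    _ = p.eval (φm z) := by rw [hk2]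
    _ = c * ∏ i : Fin n, (z - a i) / (1 - (starRingEnd ℂ) (a i) * z) := hcB z hzs
    _ = Complex.exp ((Complex.arg c : ℂ) * Complex.I) *
        ∏ i : Fin n, (z - a i) / (1 - (starRingEnd ℂ) (a i) * z) := by rw [hec]
end
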